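/- arXiv:2109.14809 — 7 statements merged into one kernel-verified Lean document; each statement's English description precedes it below -/
import Mathlib

section
/- Let n ≥ 2, k ≥ 1 be integers and R ∈ (-1,1). Suppose ψ is a solution on an interval of the ODE ψ'(r) = (1/(k(1-r²)))·(ψ(r)²+1)·((n-1)(r-R)·ψ(r) + √(1-r²)), and suppose there exists r₀ ∈ (R,1) with ψ(r₀) > 0 and ψ defined on [r₀, r) for all r in its maximal interval of existence. Then for all r ∈ (r₀,1) in the domain, ψ'(r) > ((n-1)(r-R)/(k(1-r²)))·ψ(r)³. -/
open Real Set Filter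
open Topology

/-- Right-hand side of the first-order soliton ODE:
`ψ\x27(r) = (1/(k(1-r²)))·(ψ(r)²+1)·((n-1)(r-R)·ψ(r) + √(1-r²))`. -/
noncomputable def solitonRHS (n k : ℕ) (R y r : ℝ) : ℝ :=
  (1 / ((k : ℝ) * (1 - r ^ 2))) * (y ^ 2 + 1) *
    (((n : ℝ) - 1) * (r - R) * y + Real.sqrt (1 - r ^ 2))

lemma psi_pos (n k : ℕ) (hk : 1 ≤ k) (R r₀ b : ℝ)
    (hR : R ∈ Set.Ioo (-1 : ℝ) 1) (hr₀ : r₀ ∈ Set.Ioo R 1) (hb : b ≤ 1)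
    (ψ : ℝ → ℝ) (hψ : ∀ r ∈ Set.Ico r₀ b, HasDerivAt ψ (solitonRHS n k R (ψ r) r) r)
    (hpos : 0 < ψ r₀) :
    ∀ r ∈ Set.Ico r₀ b, 0 < ψ r := by
  by_contra h
  push_neg at h
  obtain ⟨r, hr, hψr⟩ := h
  have hr₀b : r₀ < b := lt_of_le_of_lt hr.1 hr.2
  have hsub : Set.Icc r₀ r ⊆ Set.Ico r₀ b := fun s hs => ⟨hs.1, lt_of_le_of_lt hs.2 hr.2⟩
  have hcont : ContinuousOn ψ (Set.Icc r₀ r) := fun s hs =>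
    ((hψ s (hsub hs)).continuousAt).continuousWithinAt
  set S : Set ℝ := {s ∈ Set.Icc r₀ r | ψ s ≤ 0} with hS
  have hSne : S.Nonempty := ⟨r, ⟨hr.1, le_refl r⟩, hψr⟩
  have hSclosed : IsClosed S := by
    rw [← isOpen_compl_iff]
    rw [isOpen_iff_mem_nhds]
    intro s hs
    by_cases hsI : s ∈ Set.Icc r₀ r
    · have h0 : 0 < ψ s := by
        by_contra h0
        exact hs ⟨hsI, le_of_not_gt h0⟩
      have hev := ContinuousAt.eventually_lt (continuousAt_const (y := (0:ℝ)))
        ((hψ s (hsub hsI)).continuousAt) h0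
      filter_upwards [hev] with x hx hxS
      linarith [hxS.2]
    · exact Filter.mem_of_superset ((isClosed_Icc (a := r₀) (b := r)).isOpen_compl.mem_nhds hsI)
        (fun x hx hxS => hx hxS.1)
  have hbdd : BddBelow S := ⟨r₀, fun s hs => hs.1.1⟩
  set t := sInf S with ht
  have htS : t ∈ S := hSclosed.csInf_mem hSne hbdd
  have htr₀ : r₀ < t := by
    rcases lt_or_eq_of_le htS.1.1 with h | h
    · exact h
    · exfalso; rw [← h] at htS; linarith [htS.2]
  have hψposlt : ∀ s ∈ Set.Ico r₀ t, 0 < ψ s := by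
    intro s hs
    by_contra h0
    have : s ∈ S := ⟨⟨hs.1, le_trans (le_of_lt hs.2) htS.1.2⟩, le_of_not_gt h0⟩
    exact absurd (csInf_le hbdd this) (not_le.mpr hs.2)
  have hψt : ψ t = 0 := by
    rcases lt_or_eq_of_le htS.2 with h | h
    · exfalso
      have hcont' : ContinuousOn ψ (Set.Icc r₀ t) :=
        hcont.mono (Set.Icc_subset_Icc_right htS.1.2)
      have := intermediate_value_Icc' (le_of_lt htr₀) hcont'
      have h0mem : (0:ℝ) ∈ Set.Icc (ψ t) (ψ r₀) := ⟨le_of_lt h, le_of_lt hpos⟩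
      obtain ⟨c, hc, hψc⟩ := this h0mem
      have hcS : c ∈ S := ⟨⟨hc.1, le_trans hc.2 htS.1.2⟩, le_of_eq hψc⟩
      have := csInf_le hbdd hcS
      have hct : c < t := lt_of_le_of_ne hc.2 (fun he => by rw [he] at hψc; linarith)
      linarith
    · exact h
  -- derivative at t is positive
  have htmem : t ∈ Set.Ico r₀ b := hsub htS.1
  have ht1 : t < 1 := lt_of_lt_of_le htmem.2 hb
  have htm1 : -1 < t := lt_trans hR.1 (lt_trans hr₀.1 htr₀)
  have ht2 : 0 < 1 - t ^ 2 := by nlinarith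
  have hk0 : (0:ℝ) < k := by exact_mod_cast hk
  have hd := hψ t htmem
  have hdval : solitonRHS n k R (ψ t) t = Real.sqrt (1 - t ^ 2) / ((k : ℝ) * (1 - t ^ 2)) := by
    rw [hψt]; unfold solitonRHS; ring
  have hdpos : 0 < solitonRHS n k R (ψ t) t := by
    rw [hdval]
    exact div_pos (Real.sqrt_pos.mpr ht2) (by positivity)
  -- slope from the left is negative
  have hslope := hasDerivAt_iff_tendsto_slope.mp hd
  have hle : Tendsto (slope ψ t) (𝓝[<] t) (𝓝 (solitonRHS n k R (ψ t) t)) :=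
    hslope.mono_left (nhdsWithin_mono t (fun x hx => ne_of_lt hx))
  have hev : ∀ᶠ s in 𝓝[<] t, slope ψ t s ≤ 0 := by
    filter_upwards [Ioo_mem_nhdsLT_of_mem ⟨htr₀, le_refl t⟩] with s hs
    have hψs : 0 < ψ s := hψposlt s ⟨le_of_lt hs.1, hs.2⟩
    rw [slope_def_field]
    have : s - t < 0 := by linarith [hs.2]
    rw [div_nonpos_iff]
    left
    exact ⟨by rw [hψt]; linarith, by linarith⟩
  have := le_of_tendsto hle hev
  linarith

theorem stmt_2 (n k : ℕ) (hn : 2 ≤ n) (hk : 1 ≤ k) (R r₀ b : ℝ)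
    (hR : R ∈ Set.Ioo (-1 : ℝ) 1) (hr₀ : r₀ ∈ Set.Ioo R 1) (hb : b ≤ 1)
    (ψ : ℝ → ℝ) (hψ : ∀ r ∈ Set.Ico r₀ b, HasDerivAt ψ (solitonRHS n k R (ψ r) r) r)
    (hpos : 0 < ψ r₀) :
    ∀ r ∈ Set.Ioo r₀ b,
      (((n : ℝ) - 1) * (r - R) / ((k : ℝ) * (1 - r ^ 2))) * ψ r ^ 3 < deriv ψ r := by
  intro r hr
  have hrmem : r ∈ Set.Ico r₀ b := ⟨le_of_lt hr.1, hr.2⟩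
  have hψr : 0 < ψ r := psi_pos n k hk R r₀ b hR hr₀ hb ψ hψ hpos r hrmem
  rw [(hψ r hrmem).deriv]
  have hr1 : r < 1 := lt_of_lt_of_le hr.2 hb
  have hrm1 : -1 < r := lt_trans hR.1 (lt_trans hr₀.1 hr.1)
  have ht2 : 0 < 1 - r ^ 2 := by nlinarith
  have hk0 : (0:ℝ) < k := by exact_mod_cast hk
  have hc : 0 < (k:ℝ) * (1 - r ^ 2) := by positivity
  have hs : 0 < Real.sqrt (1 - r ^ 2) := Real.sqrt_pos.mpr ht2
  have hn1 : (1:ℝ) ≤ (n:ℝ) - 1 := by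
    have : (2:ℝ) ≤ n := by exact_mod_cast hn
    linarith
  have hrR : R < r := lt_trans hr₀.1 hr.1
  unfold solitonRHS
  rw [div_mul_eq_mul_div, one_div, inv_mul_eq_div, div_mul_eq_mul_div,
    div_lt_div_iff₀ hc hc]
  have hA : 0 < ((n:ℝ) - 1) * (r - R) * ψ r := by
    apply mul_pos (mul_pos (by linarith) (by linarith)) hψr
  nlinarith [mul_pos (mul_pos hψr hψr) hs, mul_pos hA hc, mul_pos hs hc,
    sq_nonneg (ψ r), mul_pos (mul_pos (mul_pos hψr hψr) hs) hc]
end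

section
/- Let n ≥ 2 and k = 1, R = 0. Suppose ψ solves ψ'(r) = (1/(1-r²))·(ψ(r)²+1)·((n-1)r·ψ(r) + √(1-r²)) on (r₀, 0) with r₀ ∈ (-1,0), and 0 < ψ(r) < -√(1-r²)/((n-1)r) for all r ∈ (r₀,0). Then ψ'(r)/(ψ(r)²+1) < 1/√(1-r²) for all r ∈ (r₀,0), and consequently arctan(ψ(r)) < arcsin(r) - arcsin(r₀) + arctan(ψ(r₀)) for all r ∈ (r₀,0). -/
open Real Set Filter

theorem stmt_5 (n : ℕ) (hn : 2 ≤ n) (r₀ : ℝ) (hr₀ : r₀ ∈ Set.Ioo (-1 : ℝ) 0)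
    (ψ : ℝ → ℝ) (hψ : ∀ r ∈ Set.Ico r₀ 0, HasDerivAt ψ (solitonRHS n 1 0 (ψ r) r) r)
    (hbound : ∀ r ∈ Set.Ioo r₀ 0,
      0 < ψ r ∧ ψ r < -Real.sqrt (1 - r ^ 2) / (((n : ℝ) - 1) * r)) :
    ∀ r ∈ Set.Ioo r₀ 0,
      deriv ψ r / (ψ r ^ 2 + 1) < 1 / Real.sqrt (1 - r ^ 2) ∧
      Real.arctan (ψ r) < Real.arcsin r - Real.arcsin r₀ + Real.arctan (ψ r₀) := by
  obtain ⟨hr₀1, hr₀0⟩ := hr₀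
  have hn2 : (2 : ℝ) ≤ (n : ℝ) := by exact_mod_cast hn
  have key : ∀ r ∈ Set.Ioo r₀ 0,
      solitonRHS n 1 0 (ψ r) r / (ψ r ^ 2 + 1) < 1 / Real.sqrt (1 - r ^ 2) := by
    rintro r ⟨hr1, hr2⟩
    have hr : -1 < r := lt_trans hr₀1 hr1
    have h1 : 0 < 1 - r ^ 2 := by nlinarith
    have hs : 0 < Real.sqrt (1 - r ^ 2) := Real.sqrt_pos.mpr h1
    have hsq : Real.sqrt (1 - r ^ 2) ^ 2 = 1 - r ^ 2 := Real.sq_sqrt h1.le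
    obtain ⟨hψpos, _⟩ := hbound r ⟨hr1, hr2⟩
    have hden : 0 < ψ r ^ 2 + 1 := by positivity
    have hval : solitonRHS n 1 0 (ψ r) r / (ψ r ^ 2 + 1)
        = (((n : ℝ) - 1) * r * ψ r + Real.sqrt (1 - r ^ 2)) / (1 - r ^ 2) := by
      unfold solitonRHS
      field_simp
      ring
    rw [hval, div_lt_div_iff₀ h1 hs]
    have hneg : ((n : ℝ) - 1) * r * ψ r < 0 := by
      have : ((n : ℝ) - 1) * r < 0 := mul_neg_of_pos_of_neg (by linarith) hr2
      exact mul_neg_of_neg_of_pos this hψpos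
    nlinarith [hs, hneg, hsq]
  have hderiv : ∀ r ∈ Set.Ioo r₀ 0,
      deriv ψ r = solitonRHS n 1 0 (ψ r) r := fun r hr =>
    (hψ r ⟨hr.1.le, hr.2⟩).deriv
  -- the function f
  set f : ℝ → ℝ := fun r => Real.arctan (ψ r) - Real.arcsin r with hf
  have hfderiv : ∀ r ∈ Set.Ico r₀ 0, HasDerivAt f
      (solitonRHS n 1 0 (ψ r) r / (ψ r ^ 2 + 1) - 1 / Real.sqrt (1 - r ^ 2)) r := by
    rintro r ⟨hr1, hr2⟩
    have hr : -1 < r := lt_of_lt_of_le hr₀1 hr1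
    have harctan : HasDerivAt (fun x => Real.arctan (ψ x))
        (1 / (1 + ψ r ^ 2) * solitonRHS n 1 0 (ψ r) r) r :=
      (Real.hasDerivAt_arctan (ψ r)).comp r (hψ r ⟨hr1, hr2⟩)
    have harcsin : HasDerivAt Real.arcsin (1 / Real.sqrt (1 - r ^ 2)) r :=
      Real.hasDerivAt_arcsin (by linarith) (by linarith)
    have := harctan.sub harcsin
    refine this.congr_deriv ?_
    symm
    rw [div_eq_mul_inv, one_div, add_comm (1 : ℝ)]
    ring
  have hcont : ContinuousOn f (Set.Ico r₀ 0) := fun r hr =>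
    ((hfderiv r hr).continuousAt).continuousWithinAt
  have hanti : StrictAntiOn f (Set.Ico r₀ 0) := by
    apply strictAntiOn_of_deriv_neg (convex_Ico r₀ 0) hcont
    intro r hr
    rw [interior_Ico] at hr
    rw [(hfderiv r ⟨hr.1.le, hr.2⟩).deriv]
    have := key r hr
    linarith
  rintro r ⟨hr1, hr2⟩
  have h1 := key r ⟨hr1, hr2⟩
  have h2 : f r < f r₀ := hanti ⟨le_refl r₀, hr₀0⟩ ⟨hr1.le, hr2⟩ hr1
  refine ⟨?_, ?_⟩
  · rw [hderiv r ⟨hr1, hr2⟩]; exact h1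
  · simp only [hf] at h2; linarith
end

section
/- Let n ≥ 2, k ≥ 2 be integers and R ∈ (-1,1). Suppose ψ solves ψ'(r) = (1/(k(1-r²)))·(ψ(r)²+1)·((n-1)(r-R)·ψ(r) + √(1-r²)) on (r₀,R) with r₀ ∈ (-1,R), and 0 < ψ(r) < -√(1-r²)/((n-1)(r-R)) for all r ∈ (r₀,R). Then ψ'(r)/(ψ(r)²+1) < 1/(2√(1-r²)) for all r ∈ (r₀,R), and hence arctan(ψ(r)) < (1/2)arcsin(r) - (1/2)arcsin(r₀) + arctan(ψ(r₀)). -/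
open Real Set Filter

theorem stmt_8 (n k : ℕ) (hn : 2 ≤ n) (hk : 2 ≤ k) (R r₀ : ℝ)
    (hR : R ∈ Set.Ioo (-1 : ℝ) 1) (hr₀ : r₀ ∈ Set.Ioo (-1 : ℝ) R)
    (ψ : ℝ → ℝ) (hψ : ∀ r ∈ Set.Ico r₀ R, HasDerivAt ψ (solitonRHS n k R (ψ r) r) r)
    (hbound : ∀ r ∈ Set.Ioo r₀ R,
      0 < ψ r ∧ ψ r < -Real.sqrt (1 - r ^ 2) / (((n : ℝ) - 1) * (r - R))) :
    ∀ r ∈ Set.Ioo r₀ R,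
      deriv ψ r / (ψ r ^ 2 + 1) < 1 / (2 * Real.sqrt (1 - r ^ 2)) ∧
      Real.arctan (ψ r) <
        (1 / 2) * Real.arcsin r - (1 / 2) * Real.arcsin r₀ + Real.arctan (ψ r₀) := by
  have hn1 : (1 : ℝ) ≤ (n : ℝ) - 1 := by
    have : (2 : ℝ) ≤ (n : ℝ) := by exact_mod_cast hn
    linarith
  have key : ∀ x ∈ Set.Ioo r₀ R,
      deriv ψ x / (ψ x ^ 2 + 1) < 1 / (2 * Real.sqrt (1 - x ^ 2)) := by
    intro x hx
    have hx1 : -1 < x := lt_trans hr₀.1 hx.1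
    have hx2 : x < 1 := lt_trans hx.2 hR.2
    have hxsq : 0 < 1 - x ^ 2 := by nlinarith
    have hs : 0 < Real.sqrt (1 - x ^ 2) := Real.sqrt_pos.2 hxsq
    have hs2 : Real.sqrt (1 - x ^ 2) ^ 2 = 1 - x ^ 2 := Real.sq_sqrt hxsq.le
    have hc : ((n : ℝ) - 1) * (x - R) < 0 := by
      have : x - R < 0 := by linarith [hx.2]
      nlinarith
    obtain ⟨hψpos, hψlt⟩ := hbound x hx
    -- from ψ < -√/(c), with c < 0: c*ψ > -√
    have hnum_pos : 0 < ((n : ℝ) - 1) * (x - R) * ψ x + Real.sqrt (1 - x ^ 2) := by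
      rw [lt_div_iff_of_neg hc] at hψlt
      nlinarith [hψlt]
    have hnum_lt : ((n : ℝ) - 1) * (x - R) * ψ x < 0 := by
      nlinarith
    have hd : deriv ψ x = solitonRHS n k R (ψ x) x :=
      (hψ x ⟨hx.1.le, hx.2⟩).deriv
    have hψ2 : (0 : ℝ) < ψ x ^ 2 + 1 := by positivity
    have hk2 : (2 : ℝ) ≤ (k : ℝ) := by exact_mod_cast hk
    have hkpos : (0 : ℝ) < (k : ℝ) * (1 - x ^ 2) := by positivity
    rw [hd, solitonRHS]
    rw [mul_comm, ← mul_assoc, mul_div_assoc, div_self (ne_of_gt hψ2), mul_one]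
    have h1 : (((n : ℝ) - 1) * (x - R) * ψ x + Real.sqrt (1 - x ^ 2)) *
        (1 / ((k : ℝ) * (1 - x ^ 2))) < Real.sqrt (1 - x ^ 2) / ((k : ℝ) * (1 - x ^ 2)) := by
      rw [mul_one_div]
      exact (div_lt_div_iff_of_pos_right hkpos).2 (by linarith)
    calc (((n : ℝ) - 1) * (x - R) * ψ x + Real.sqrt (1 - x ^ 2)) *
        (1 / ((k : ℝ) * (1 - x ^ 2)))
        < Real.sqrt (1 - x ^ 2) / ((k : ℝ) * (1 - x ^ 2)) := h1
      _ ≤ 1 / (2 * Real.sqrt (1 - x ^ 2)) := by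
          rw [div_le_div_iff₀ hkpos (by positivity)]
          nlinarith
  intro r hr
  refine ⟨key r hr, ?_⟩
  -- second part: integrate
  set f : ℝ → ℝ := fun x => (1 / 2) * Real.arcsin x - Real.arctan (ψ x) with hf
  have hsub : Set.Icc r₀ r ⊆ Set.Ico r₀ R := fun x hx => ⟨hx.1, lt_of_le_of_lt hx.2 hr.2⟩
  have hcont : ContinuousOn f (Set.Icc r₀ r) := by
    apply ContinuousOn.sub
    · exact (continuous_const.mul Real.continuous_arcsin).continuousOn
    · exact fun x hx => (Real.continuous_arctan.continuousAt.comp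
        (hψ x (hsub hx)).continuousAt).continuousWithinAt
  have hmono : StrictMonoOn f (Set.Icc r₀ r) := by
    apply strictMonoOn_of_deriv_pos (convex_Icc r₀ r) hcont
    intro x hx
    rw [interior_Icc] at hx
    have hxR : x ∈ Set.Ioo r₀ R := ⟨hx.1, lt_trans hx.2 hr.2⟩
    have hx1 : x ≠ -1 := by have := lt_trans hr₀.1 hxR.1; linarith
    have hx2 : x ≠ 1 := by have := lt_trans hxR.2 hR.2; linarith
    have hψd := hψ x ⟨hxR.1.le, hxR.2⟩
    have hD : HasDerivAt f
        ((1 / 2) * (1 / Real.sqrt (1 - x ^ 2)) -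
          1 / (1 + ψ x ^ 2) * solitonRHS n k R (ψ x) x) x :=
      ((Real.hasDerivAt_arcsin hx1 hx2).const_mul (1 / 2 : ℝ)).sub hψd.arctan
    rw [hD.deriv]
    have hdψ : deriv ψ x = solitonRHS n k R (ψ x) x := hψd.deriv
    have hkey := key x hxR
    rw [hdψ] at hkey
    have hψ2 : (0 : ℝ) < ψ x ^ 2 + 1 := by positivity
    have hxsq : 0 < 1 - x ^ 2 := by
      have h1 : -1 < x := lt_trans hr₀.1 hxR.1
      have h2 : x < 1 := lt_trans hxR.2 hR.2
      nlinarith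
    have hs : 0 < Real.sqrt (1 - x ^ 2) := Real.sqrt_pos.2 hxsq
    have e1 : 1 / (1 + ψ x ^ 2) * solitonRHS n k R (ψ x) x
        = solitonRHS n k R (ψ x) x / (ψ x ^ 2 + 1) := by
      rw [one_div, add_comm, div_eq_inv_mul]
    have e2 : (1 / 2 : ℝ) * (1 / Real.sqrt (1 - x ^ 2)) = 1 / (2 * Real.sqrt (1 - x ^ 2)) := by
      rw [one_div_mul_one_div]
    rw [e1, e2]
    linarith
  have hlt : f r₀ < f r := hmono ⟨le_refl r₀, hr.1.le⟩ ⟨hr.1.le, le_refl r⟩ hr.1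
  simp only [hf] at hlt
  linarith
end

section
/- Let n ≥ 2, k ≥ 1, R ∈ (-1,1), and let ψ be a maximal solution of ψ'(r) = (1/(k(1-r²)))·(ψ(r)²+1)·((n-1)(r-R)·ψ(r) + √(1-r²)) on a subinterval of (-1,1). If there exists r₀ ∈ (-1,R) with ψ(r₀) > -√(1-r₀²)/((n-1)(r₀-R)), then there exists r₁ ∈ (-1,r₀) such that ψ(r) → +∞ as r ↓ r₁. -/
open Real Set Filter Topology

lemma slope_nonneg_of_left_lt {f : ℝ → ℝ} {f' u T : ℝ} (hd : HasDerivAt f f' T)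
    (hu : u < T) (h : ∀ s ∈ Set.Ico u T, f s < f T) : 0 ≤ f' := by
  have h1 : Tendsto (slope f T) (𝓝[<] T) (𝓝 f') :=
    (hasDerivAt_iff_tendsto_slope.1 hd).mono_left
      (nhdsWithin_mono _ (fun x hx => ne_of_lt hx))
  refine ge_of_tendsto h1 ?_
  filter_upwards [Ioo_mem_nhdsLT_of_mem (⟨hu, le_rfl⟩ : T ∈ Set.Ioc u T)] with s hs
  have h2 : f s - f T < 0 := sub_neg.2 (h s ⟨hs.1.le, hs.2⟩)
  have h3 : s - T < 0 := sub_neg.2 hs.2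
  rw [slope_def_field]
  exact div_nonneg_of_nonpos h2.le h3.le

lemma sqrt_key {r r₀ R : ℝ} (h1 : -1 < r) (h2 : r ≤ r₀) (h3 : r₀ < R) (h4 : R < 1) :
    Real.sqrt (1-r^2)*(R-r₀) ≤ Real.sqrt (1-r₀^2)*(R-r) := by
  have hr1 : r < 1 := h2.trans_lt (h3.trans h4)
  have hr₀1 : r₀ < 1 := h3.trans h4
  have hnn : (0:ℝ) ≤ 1 - r^2 := by nlinarith
  have hnn₀ : (0:ℝ) ≤ 1 - r₀^2 := by nlinarith
  have e1 : Real.sqrt (1-r^2)*(R-r₀) = Real.sqrt ((1-r^2)*(R-r₀)^2) := by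
    rw [Real.sqrt_mul hnn, Real.sqrt_sq (by linarith : (0:ℝ) ≤ R - r₀)]
  have e2 : Real.sqrt (1-r₀^2)*(R-r) = Real.sqrt ((1-r₀^2)*(R-r)^2) := by
    rw [Real.sqrt_mul hnn₀, Real.sqrt_sq (by linarith : (0:ℝ) ≤ R - r)]
  rw [e1, e2]
  apply Real.sqrt_le_sqrt
  have hrR : (0:ℝ) ≤ 1 - r*R := by nlinarith
  have hr₀R : (0:ℝ) ≤ 1 - r₀*R := by nlinarith
  nlinarith [mul_nonneg (mul_nonneg (sub_nonneg.2 h2) hrR) (sub_nonneg.2 h3.le),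
    mul_nonneg (mul_nonneg (sub_nonneg.2 h2) hr₀R) (sub_nonneg.2 (h2.trans h3.le))]

lemma bad_le {N R r₀ c r y : ℝ} (hN : 0 < N) (h3 : r₀ < R) (h4 : R < 1)
    (hδ0 : Real.sqrt (1-r₀^2) ≤ N*(R-r₀)*c)
    (h1 : -1 < r) (h2 : r ≤ r₀) (hy : c ≤ y) :
    N*(r-R)*y + Real.sqrt (1-r^2) ≤ -(N*(R-r₀)*c - Real.sqrt (1-r₀^2)) := by
  have key := sqrt_key h1 h2 h3 h4
  have h5 : Real.sqrt (1-r^2) ≤ Real.sqrt (1-r₀^2) + N*c*(r₀-r) := by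
    have hpos : (0:ℝ) < R - r₀ := sub_pos.2 h3
    nlinarith [key, mul_le_mul_of_nonneg_left hδ0 (sub_nonneg.2 h2)]
  have h6 : N*(r-R)*y ≤ N*(r-R)*c := by
    apply mul_le_mul_of_nonpos_left hy
    nlinarith
  linarith

lemma hasDerivAt_solitonRHS (n k : ℕ) (R s y : ℝ) :
    HasDerivAt (fun y => solitonRHS n k R y s)
      ((1/((k:ℝ)*(1-s^2))) * (2*y*(((n:ℝ)-1)*(s-R)*y + Real.sqrt (1-s^2))
        + (y^2+1)*(((n:ℝ)-1)*(s-R)))) y := by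
  have h1 : HasDerivAt (fun y : ℝ => y^2+1) (2*y) y := by
    simpa using (hasDerivAt_pow 2 y).add_const 1
  have h2 : HasDerivAt (fun y : ℝ => ((n:ℝ)-1)*(s-R)*y + Real.sqrt (1-s^2))
      (((n:ℝ)-1)*(s-R)) y := by
    simpa using ((hasDerivAt_id y).const_mul (((n:ℝ)-1)*(s-R))).add_const (Real.sqrt (1-s^2))
  have h3 := (h1.mul h2).const_mul (1/((k:ℝ)*(1-s^2)))
  have hfun : (fun y => solitonRHS n k R y s)
      = fun y : ℝ => (1/((k:ℝ)*(1-s^2))) * ((y^2+1)*(((n:ℝ)-1)*(s-R)*y + Real.sqrt (1-s^2))) := by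
    funext z; simp only [solitonRHS]; ring
  rw [hfun]
  exact h3

lemma solitonRHS_le {n k : ℕ} {R r₀ c r y : ℝ} (hn : 2 ≤ n) (hk : 1 ≤ k)
    (h3 : r₀ < R) (h4 : R < 1)
    (hδ0 : Real.sqrt (1-r₀^2) ≤ ((n:ℝ)-1)*(R-r₀)*c)
    (h1 : -1 < r) (h2 : r ≤ r₀) (hy : c ≤ y) :
    solitonRHS n k R y r
      ≤ -(((((n:ℝ)-1)*(R-r₀)*c - Real.sqrt (1-r₀^2)) / ((k:ℝ)*(1-r^2))) * y^2) := by
  have hN : (0:ℝ) < ((n:ℝ)-1) := by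
    have : (2:ℝ) ≤ (n:ℝ) := by exact_mod_cast hn
    linarith
  have hb := bad_le hN h3 h4 hδ0 h1 h2 hy
  have hr1 : r < 1 := lt_trans (lt_of_le_of_lt h2 h3) h4
  have hk1 : (1:ℝ) ≤ (k:ℝ) := by exact_mod_cast hk
  have hr2 : (0:ℝ) < 1 - r^2 := by nlinarith
  have hK : (0:ℝ) < (k:ℝ)*(1-r^2) := mul_pos (by linarith) hr2
  set δ := ((n:ℝ)-1)*(R-r₀)*c - Real.sqrt (1-r₀^2) with hδ
  have hδnn : 0 ≤ δ := by rw [hδ]; linarith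
  have step1 : solitonRHS n k R y r ≤ (1/((k:ℝ)*(1-r^2))) * (y^2+1) * (-δ) := by
    unfold solitonRHS
    apply mul_le_mul_of_nonneg_left hb (by positivity)
  have step2 : (1/((k:ℝ)*(1-r^2))) * (y^2+1) * (-δ)
      = -((δ/((k:ℝ)*(1-r^2)))*y^2) - δ/((k:ℝ)*(1-r^2)) := by
    field_simp
    ring
  have hdnn : 0 ≤ δ/((k:ℝ)*(1-r^2)) := div_nonneg hδnn hK.le
  linarith

set_option maxHeartbeats 2000000 in
theorem stmt_10 (n k : ℕ) (hn : 2 ≤ n) (hk : 1 ≤ k) (R a b : ℝ)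
    (hR : R ∈ Set.Ioo (-1 : ℝ) 1) (hab : Set.Ioo a b ⊆ Set.Ioo (-1 : ℝ) 1)
    (ψ : ℝ → ℝ) (hψ : ∀ r ∈ Set.Ioo a b, HasDerivAt ψ (solitonRHS n k R (ψ r) r) r)
    (hmax : ¬ ∃ (a' : ℝ) (φ : ℝ → ℝ), a' < a ∧ -1 ≤ a' ∧ Set.EqOn φ ψ (Set.Ioo a b) ∧
      ∀ r ∈ Set.Ioo a' b, HasDerivAt φ (solitonRHS n k R (φ r) r) r)
    (r₀ : ℝ) (hr₀ab : r₀ ∈ Set.Ioo a b) (hr₀R : r₀ ∈ Set.Ioo (-1 : ℝ) R)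
    (hpos : -Real.sqrt (1 - r₀ ^ 2) / (((n : ℝ) - 1) * (r₀ - R)) < ψ r₀) :
    ∃ r₁ ∈ Set.Ioo (-1 : ℝ) r₀,
      Filter.Tendsto ψ (nhdsWithin r₁ (Set.Ioi r₁)) Filter.atTop := by
  obtain ⟨ha0, hr₀b⟩ := hr₀ab
  obtain ⟨hr₀m1, hr₀R'⟩ := hr₀R
  have hR1 : R < 1 := hR.2
  have hr₀1 : r₀ < 1 := hr₀R'.trans hR1
  have hk1 : (1:ℝ) ≤ (k:ℝ) := by exact_mod_cast hk
  have hn1 : (2:ℝ) ≤ (n:ℝ) := by exact_mod_cast hn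
  have hN : (0:ℝ) < (n:ℝ)-1 := by linarith
  have ham1 : -1 ≤ a := by
    by_contra h
    push_neg at h
    have hmem : (a + (-1))/2 ∈ Set.Ioo a b := ⟨by linarith, by linarith [hr₀m1, ha0.trans hr₀b]⟩
    exact absurd (hab hmem).1 (by linarith)
  set c := ψ r₀ with hcdef
  have hsqpos : 0 < Real.sqrt (1 - r₀^2) := Real.sqrt_pos.2 (by nlinarith)
  have hden : 0 < ((n:ℝ)-1)*(R-r₀) := by nlinarith
  have hrewrite : -Real.sqrt (1 - r₀ ^ 2) / (((n : ℝ) - 1) * (r₀ - R))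
      = Real.sqrt (1 - r₀ ^ 2) / (((n : ℝ) - 1) * (R - r₀)) := by
    rw [div_eq_div_iff (by nlinarith) (by nlinarith)]
    ring
  rw [hrewrite, div_lt_iff₀ hden] at hpos
  have hcpos : 0 < c := by nlinarith
  have hδ0 : Real.sqrt (1-r₀^2) ≤ ((n:ℝ)-1)*(R-r₀)*c := by nlinarith
  set δ := ((n:ℝ)-1)*(R-r₀)*c - Real.sqrt (1-r₀^2) with hδdef
  have hδpos : 0 < δ := by rw [hδdef]; nlinarith
  have hsub : Set.Ioc a r₀ ⊆ Set.Ioo a b := fun s hs => ⟨hs.1, lt_of_le_of_lt hs.2 hr₀b⟩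
  have hm1 : ∀ s ∈ Set.Ioc a r₀, -1 < s := fun s hs => lt_of_le_of_lt ham1 hs.1
  have hcont : ContinuousOn ψ (Set.Ioo a b) :=
    fun s hs => ((hψ s hs).continuousAt).continuousWithinAt
  -- ψ stays above c to the left of r₀
  have Hc : ∀ s ∈ Set.Ioc a r₀, c ≤ ψ s := by
    rintro r ⟨har, hrr₀⟩
    by_contra hlt
    push_neg at hlt
    have hrr₀' : r < r₀ := by
      rcases lt_or_eq_of_le hrr₀ with h | h
      · exact h
      · rw [h] at hlt; exact absurd hlt (lt_irrefl c)
    have hIccsub : Set.Icc r r₀ ⊆ Set.Ioo a b := fun s hs =>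
      ⟨lt_of_lt_of_le har hs.1, lt_of_le_of_lt hs.2 hr₀b⟩
    have hSclosed : IsClosed (Set.Icc r r₀ ∩ ψ ⁻¹' (Set.Ici c)) :=
      (hcont.mono hIccsub).preimage_isClosed_of_isClosed isClosed_Icc isClosed_Ici
    have hSne : (Set.Icc r r₀ ∩ ψ ⁻¹' (Set.Ici c)).Nonempty :=
      ⟨r₀, right_mem_Icc.2 hrr₀'.le, le_refl c⟩
    have hSbdd : BddBelow (Set.Icc r r₀ ∩ ψ ⁻¹' (Set.Ici c)) := ⟨r, fun s hs => hs.1.1⟩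
    have hTS : sInf (Set.Icc r r₀ ∩ ψ ⁻¹' (Set.Ici c)) ∈ Set.Icc r r₀ ∩ ψ ⁻¹' (Set.Ici c) :=
      hSclosed.csInf_mem hSne hSbdd
    set T := sInf (Set.Icc r r₀ ∩ ψ ⁻¹' (Set.Ici c)) with hTdef
    have hrT : r < T := by
      rcases lt_or_eq_of_le hTS.1.1 with h | h
      · exact h
      · exfalso; rw [← h] at hTS; exact absurd hTS.2 (not_le.2 hlt)
    have hlow : ∀ s ∈ Set.Ico r T, ψ s < ψ T := by
      intro s hs
      have hsS : s ∉ Set.Icc r r₀ ∩ ψ ⁻¹' (Set.Ici c) := fun hmem =>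
        absurd (csInf_le hSbdd hmem) (not_le.2 hs.2)
      have hψs : ψ s < c := by
        by_contra hge
        exact hsS ⟨⟨hs.1, le_trans hs.2.le hTS.1.2⟩, not_lt.1 hge⟩
      exact lt_of_lt_of_le hψs hTS.2
    have hd := hψ T (hIccsub hTS.1)
    have h0 := slope_nonneg_of_left_lt hd hrT hlow
    have hTmem : T ∈ Set.Ioc a r₀ := ⟨lt_trans har hrT, hTS.1.2⟩
    have hneg := solitonRHS_le hn hk hr₀R' hR1 hδ0 (hm1 T hTmem) hTS.1.2 hTS.2
    rw [← hδdef] at hneg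
    have hT1 : T < 1 := lt_of_le_of_lt hTS.1.2 hr₀1
    have hT2 : (0:ℝ) < 1 - T^2 := by nlinarith [hm1 T hTmem]
    have hψT : 0 < ψ T := lt_of_lt_of_le hcpos hTS.2
    have hprod : 0 < (δ / ((k:ℝ)*(1-T^2))) * (ψ T)^2 :=
      mul_pos (div_pos hδpos (mul_pos (by linarith) hT2)) (by positivity)
    linarith
  have hKpos : ∀ s ∈ Set.Ioc a r₀, (0:ℝ) < (k:ℝ)*(1-s^2) := by
    intro s hs
    have h1 := hm1 s hs
    have h2 : s < 1 := lt_of_le_of_lt hs.2 hr₀1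
    exact mul_pos (by linarith) (by nlinarith)
  -- ψ is antitone on Ioc a r₀
  have hanti : AntitoneOn ψ (Set.Ioc a r₀) := by
    apply antitoneOn_of_deriv_nonpos (convex_Ioc a r₀) (hcont.mono hsub)
    · intro s hs
      rw [interior_Ioc] at hs
      exact ((hψ s (hsub (Ioo_subset_Ioc_self hs))).differentiableAt).differentiableWithinAt
    · intro s hs
      rw [interior_Ioc] at hs
      have hs' : s ∈ Set.Ioc a r₀ := Ioo_subset_Ioc_self hs
      rw [(hψ s (hsub hs')).deriv]
      have hneg := solitonRHS_le hn hk hr₀R' hR1 hδ0 (hm1 s hs') hs'.2 (Hc s hs')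
      rw [← hδdef] at hneg
      have hprod : 0 ≤ (δ / ((k:ℝ)*(1-s^2))) * (ψ s)^2 :=
        mul_nonneg (div_nonneg hδpos.le (hKpos s hs').le) (sq_nonneg _)
      linarith
  -- the barrier function F
  have hFd : ∀ s ∈ Set.Ioc a r₀,
      HasDerivAt (fun t => (ψ t)⁻¹ - (δ/(2*(k:ℝ)))*Real.log (1+t))
        (-(solitonRHS n k R (ψ s) s)/(ψ s)^2 - (δ/(2*(k:ℝ)))*(1/(1+s))) s := by
    intro s hs
    have hψpos : 0 < ψ s := lt_of_lt_of_le hcpos (Hc s hs)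
    have h1s : (1:ℝ) + s ≠ 0 := by have := hm1 s hs; intro hcontr; linarith
    have hinv := (hψ s (hsub hs)).inv (ne_of_gt hψpos)
    have hlog : HasDerivAt (fun t : ℝ => Real.log (1+t)) (1/(1+s)) s := by
      simpa using (HasDerivAt.log ((hasDerivAt_id s).const_add 1) h1s)
    exact hinv.sub (hlog.const_mul (δ/(2*(k:ℝ))))
  have hF' : ∀ s ∈ Set.Ioc a r₀,
      0 ≤ -(solitonRHS n k R (ψ s) s)/(ψ s)^2 - (δ/(2*(k:ℝ)))*(1/(1+s)) := by
    intro s hs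
    have hψpos : 0 < ψ s := lt_of_lt_of_le hcpos (Hc s hs)
    have hs1 : -1 < s := hm1 s hs
    have h1s : (0:ℝ) < 1 + s := by linarith
    have hK := hKpos s hs
    have hq := solitonRHS_le hn hk hr₀R' hR1 hδ0 hs1 hs.2 (Hc s hs)
    rw [← hδdef] at hq
    have h1' : (δ/((k:ℝ)*(1-s^2))) * (ψ s)^2 ≤ -(solitonRHS n k R (ψ s) s) := by linarith
    have h1 : δ/((k:ℝ)*(1-s^2)) ≤ -(solitonRHS n k R (ψ s) s)/(ψ s)^2 := by
      rw [le_div_iff₀ (by positivity : (0:ℝ) < (ψ s)^2)]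
      exact h1'
    have h2 : (δ/(2*(k:ℝ)))*(1/(1+s)) ≤ δ/((k:ℝ)*(1-s^2)) := by
      have e : (δ/(2*(k:ℝ)))*(1/(1+s)) = δ/(2*(k:ℝ)*(1+s)) := by
        rw [div_mul_div_comm, mul_one]
      rw [e]
      apply div_le_div_of_nonneg_left hδpos.le hK
      nlinarith [mul_nonneg (show (0:ℝ) ≤ (k:ℝ) by linarith) (sq_nonneg (1+s))]
    linarith
  -- uniform lower bound on points of Ioc a r₀
  have hFbound : ∀ x ∈ Set.Ioc a r₀, (1+r₀)*Real.exp (-(2*(k:ℝ))/(δ*c)) < 1 + x := by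
    intro x hx
    have hxr₀ : x ≤ r₀ := hx.2
    have hψx : 0 < ψ x := lt_of_lt_of_le hcpos (Hc x hx)
    have hx1 : (0:ℝ) < 1 + x := by linarith [hm1 x hx]
    have hr₀p : (0:ℝ) < 1 + r₀ := by linarith
    have hFmono : (ψ x)⁻¹ - (δ/(2*(k:ℝ)))*Real.log (1+x)
        ≤ (ψ r₀)⁻¹ - (δ/(2*(k:ℝ)))*Real.log (1+r₀) := by
      have hmono : MonotoneOn (fun t => (ψ t)⁻¹ - (δ/(2*(k:ℝ)))*Real.log (1+t))
          (Set.Icc x r₀) := by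
        apply monotoneOn_of_deriv_nonneg (convex_Icc x r₀)
        · intro s hs
          exact (hFd s ⟨lt_of_lt_of_le hx.1 hs.1, hs.2⟩).continuousAt.continuousWithinAt
        · intro s hs
          rw [interior_Icc] at hs
          exact (hFd s ⟨lt_trans hx.1 hs.1, hs.2.le⟩).differentiableAt.differentiableWithinAt
        · intro s hs
          rw [interior_Icc] at hs
          have hs' : s ∈ Set.Ioc a r₀ := ⟨lt_trans hx.1 hs.1, hs.2.le⟩
          rw [(hFd s hs').deriv]
          exact hF' s hs'
      exact hmono (left_mem_Icc.2 hxr₀) (right_mem_Icc.2 hxr₀) hxr₀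
    have h2 : (δ/(2*(k:ℝ)))*(Real.log (1+r₀) - Real.log (1+x)) < c⁻¹ := by
      have hinvx : 0 < (ψ x)⁻¹ := inv_pos.2 hψx
      rw [← hcdef] at hFmono
      nlinarith [hFmono, hinvx]
    have h2' : δ*(Real.log (1+r₀) - Real.log (1+x)) < c⁻¹*(2*(k:ℝ)) := by
      rw [div_mul_eq_mul_div, div_lt_iff₀ (by linarith : (0:ℝ) < 2*(k:ℝ))] at h2
      linarith
    have h3 : Real.log (1+r₀) - Real.log (1+x) < (2*(k:ℝ))/(δ*c) := by
      rw [lt_div_iff₀ (by positivity : (0:ℝ) < δ*c)]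
      have hmul := mul_lt_mul_of_pos_left h2' hcpos
      have e2k : c*(c⁻¹*(2*(k:ℝ))) = 2*(k:ℝ) := by field_simp
      nlinarith [hmul, e2k]
    have e : (1+r₀)*Real.exp (-(2*(k:ℝ))/(δ*c))
        = Real.exp (Real.log (1+r₀) + (-(2*(k:ℝ))/(δ*c))) := by
      rw [Real.exp_add, Real.exp_log hr₀p]
    rw [e]
    have h5 : Real.log (1+r₀) + (-(2*(k:ℝ))/(δ*c)) < Real.log (1+x) := by
      rw [neg_div]; linarith
    calc Real.exp (Real.log (1+r₀) + (-(2*(k:ℝ))/(δ*c)))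
        < Real.exp (Real.log (1+x)) := Real.exp_lt_exp.2 h5
      _ = 1 + x := Real.exp_log hx1
  set ε := (1+r₀)*Real.exp (-(2*(k:ℝ))/(δ*c)) with hεdef
  have hr₀p : (0:ℝ) < 1 + r₀ := by linarith
  have hε0 : 0 < ε := mul_pos hr₀p (Real.exp_pos _)
  have hεlt : ε < 1 + r₀ := by
    have hq : Real.exp (-(2*(k:ℝ))/(δ*c)) < 1 := by
      rw [← Real.exp_zero]
      apply Real.exp_lt_exp.2
      rw [neg_div]
      have : (0:ℝ) < (2*(k:ℝ))/(δ*c) := by positivity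
      linarith
    calc ε = (1+r₀)*Real.exp (-(2*(k:ℝ))/(δ*c)) := hεdef
      _ < (1+r₀)*1 := by exact mul_lt_mul_of_pos_left hq hr₀p
      _ = 1 + r₀ := mul_one _
  have haε : ε - 1 ≤ a := by
    by_contra h
    push_neg at h
    have hxm : (a + (ε-1))/2 ∈ Set.Ioc a r₀ := ⟨by linarith, by linarith⟩
    have := hFbound _ hxm
    linarith
  have ham1' : -1 < a := lt_of_lt_of_le (by linarith) haε
  by_cases hbdd : BddAbove (ψ '' Set.Ioc a r₀)
  case neg =>
    refine ⟨a, ⟨ham1', ha0⟩, ?_⟩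
    rw [Filter.tendsto_atTop]
    intro M
    obtain ⟨s, hsmem, hMs⟩ : ∃ s ∈ Set.Ioc a r₀, M < ψ s := by
      by_contra h
      push_neg at h
      exact hbdd ⟨M, by rintro y ⟨s, hs, rfl⟩; exact h s hs⟩
    filter_upwards [Ioc_mem_nhdsGT hsmem.1] with t ht
    have htmem : t ∈ Set.Ioc a r₀ := ⟨ht.1, ht.2.trans hsmem.2⟩
    exact le_trans hMs.le (hanti htmem hsmem ht.2)
  case pos =>
    exfalso
    apply hmax
    obtain ⟨M, hM⟩ := hbdd
    have hMb : ∀ s ∈ Set.Ioc a r₀, ψ s ≤ M := fun s hs => hM (mem_image_of_mem ψ hs)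
    have hcM : c ≤ M := hMb r₀ ⟨ha0, le_refl r₀⟩
    set w : ℝ := (a - 1)/2 with hwdef
    have hw1 : -1 < w := by rw [hwdef]; linarith
    have hwa : w < a := by rw [hwdef]; linarith
    set t₀' : ℝ := (a + r₀)/2 with ht₀'def
    have ht₀'1 : a < t₀' := by rw [ht₀'def]; linarith
    have ht₀'2 : t₀' < r₀ := by rw [ht₀'def]; linarith
    have ht₀'3 : t₀' < 1 := by linarith
    set Kset : Set (ℝ×ℝ) := Set.Icc w t₀' ×ˢ Set.Icc (c-1) (M+1) with hKs
    have hKcomp : IsCompact Kset := isCompact_Icc.prod isCompact_Icc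
    have hKt : ∀ p : ℝ×ℝ, p ∈ Kset → (0:ℝ) < 1 - p.1^2 := by
      rintro ⟨s, y⟩ ⟨⟨hs1, hs2⟩, -⟩
      have h1 : -1 < s := lt_of_lt_of_le hw1 hs1
      have h2 : s < 1 := lt_of_le_of_lt hs2 ht₀'3
      nlinarith
    have hne : ∀ p ∈ Kset, ((k:ℝ)*(1-p.1^2)) ≠ 0 := fun p hp =>
      ne_of_gt (mul_pos (by linarith) (hKt p hp))
    have hVcont : ContinuousOn (fun p : ℝ×ℝ => solitonRHS n k R p.2 p.1) Kset := by
      simp only [solitonRHS]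
      apply ContinuousOn.mul
      apply ContinuousOn.mul
      · exact continuousOn_const.div (by fun_prop) hne
      · fun_prop
      · apply ContinuousOn.add
        · fun_prop
        · exact (Real.continuous_sqrt.comp (by fun_prop)).continuousOn
    have hDVcont : ContinuousOn (fun p : ℝ×ℝ =>
        (1/((k:ℝ)*(1-p.1^2))) * (2*p.2*(((n:ℝ)-1)*(p.1-R)*p.2 + Real.sqrt (1-p.1^2))
          + (p.2^2+1)*(((n:ℝ)-1)*(p.1-R)))) Kset := by
      apply ContinuousOn.mul
      · exact continuousOn_const.div (by fun_prop) hne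
      · apply ContinuousOn.add
        · apply ContinuousOn.mul (by fun_prop)
          apply ContinuousOn.add (by fun_prop)
          exact (Real.continuous_sqrt.comp (by fun_prop)).continuousOn
        · fun_prop
    obtain ⟨C₀, hC₀⟩ := hKcomp.exists_bound_of_continuousOn hVcont
    obtain ⟨L₀, hL₀⟩ := hKcomp.exists_bound_of_continuousOn hDVcont
    set C : ℝ := max C₀ 0 with hCdef
    have hC0 : 0 ≤ C := le_max_right _ _
    set L : ℝ := max L₀ 0 with hLdef
    have hL0 : 0 ≤ L := le_max_right _ _
    set h : ℝ := 1/(2*C+2) with hhdef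
    have hh0 : 0 < h := by rw [hhdef]; positivity
    set t₀ : ℝ := min t₀' (a + h) with ht₀def
    set tMin : ℝ := max ((w+a)/2) (a - h) with htMdef
    have htM1 : tMin < a := max_lt (by linarith) (by linarith)
    have htM2 : w < tMin := lt_of_lt_of_le (by linarith : w < (w+a)/2) (le_max_left _ _)
    have ht₀a : a < t₀ := lt_min ht₀'1 (by linarith)
    have ht₀le : t₀ ≤ t₀' := min_le_left _ _
    have htMt₀ : tMin ≤ t₀ := le_of_lt (htM1.trans ht₀a)
    have hspan : C*(t₀ - tMin) ≤ 1 := by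
      have h1 : t₀ ≤ a + h := min_le_right _ _
      have h2 : a - h ≤ tMin := le_max_right _ _
      have h3 : t₀ - tMin ≤ 2*h := by linarith
      have h4 : C*(t₀ - tMin) ≤ C*(2*h) := mul_le_mul_of_nonneg_left h3 hC0
      have h5 : C*(2*h) ≤ 1 := by
        have h2h : 2*h = 1/(C+1) := by
          rw [hhdef]
          have e1 : 2*(1/(2*C+2)) = 2/(2*C+2) := by ring
          rw [e1, div_eq_div_iff (by linarith) (by linarith)]
          ring
        rw [h2h, mul_one_div, div_le_one (by linarith)]
        linarith
      linarith
    set πt : ℝ → ℝ := fun t => max tMin (min t₀ t) with hπt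
    set πx : ℝ → ℝ := fun x => max (c-1) (min (M+1) x) with hπx
    set vt : ℝ → ℝ → ℝ := fun t x => solitonRHS n k R (πx x) (πt t) with hvt
    have hKloKhi : c-1 ≤ M+1 := by linarith
    have hπtmem : ∀ t, πt t ∈ Set.Icc tMin t₀ :=
      fun t => ⟨le_max_left _ _, max_le htMt₀ (min_le_left _ _)⟩
    have hπxmem : ∀ x, πx x ∈ Set.Icc (c-1) (M+1) :=
      fun x => ⟨le_max_left _ _, max_le hKloKhi (min_le_left _ _)⟩
    have hsubK : Set.Icc tMin t₀ ⊆ Set.Icc w t₀' := Icc_subset_Icc htM2.le ht₀le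
    have hmemK : ∀ t x, ((πt t, πx x) : ℝ×ℝ) ∈ Kset := fun t x => ⟨hsubK (hπtmem t), hπxmem x⟩
    have hπtid : ∀ t ∈ Set.Icc tMin t₀, πt t = t := by
      intro t ht
      rw [hπt]
      simp only []
      rw [min_eq_right ht.2, max_eq_right ht.1]
    have hπxid : ∀ x ∈ Set.Icc (c-1) (M+1), πx x = x := by
      intro x hx
      rw [hπx]
      simp only []
      rw [min_eq_right hx.2, max_eq_right hx.1]
    -- Lipschitz bound for the truncated field
    have hliponK : ∀ s ∈ Set.Icc w t₀',
        LipschitzOnWith L.toNNReal (fun y => solitonRHS n k R y s) (Set.Icc (c-1) (M+1)) := by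
      intro s hsK
      apply (convex_Icc (c-1) (M+1)).lipschitzOnWith_of_nnnorm_hasDerivWithin_le
        (f' := fun y => (1/((k:ℝ)*(1-s^2))) * (2*y*(((n:ℝ)-1)*(s-R)*y + Real.sqrt (1-s^2))
          + (y^2+1)*(((n:ℝ)-1)*(s-R))))
        (fun y _ => (hasDerivAt_solitonRHS n k R s y).hasDerivWithinAt)
      intro y hy
      have hb := hL₀ (s, y) ⟨hsK, hy⟩
      rw [← norm_toNNReal]
      exact Real.toNNReal_mono (le_trans hb (le_max_left _ _))
    have hπxlip : LipschitzWith 1 πx := (LipschitzWith.id.const_min (M+1)).const_max (c-1)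
    have hlip : ∀ t, LipschitzWith L.toNNReal (vt t) := by
      intro t
      rw [lipschitzWith_iff_dist_le_mul]
      intro x y
      have h1 := (lipschitzOnWith_iff_dist_le_mul.1
        (hliponK (πt t) (hsubK (hπtmem t)))) (πx x) (hπxmem x) (πx y) (hπxmem y)
      have h2 : dist (πx x) (πx y) ≤ dist x y := by
        have := lipschitzWith_iff_dist_le_mul.1 hπxlip x y
        simpa using this
      calc dist (vt t x) (vt t y)
          ≤ L.toNNReal * dist (πx x) (πx y) := h1
        _ ≤ L.toNNReal * dist x y := mul_le_mul_of_nonneg_left h2 (NNReal.coe_nonneg _)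
    have hvtcont : ∀ x, Continuous (fun t => vt t x) := by
      intro x
      have hπtc : Continuous πt := continuous_const.max (continuous_const.min continuous_id)
      exact hVcont.comp_continuous (hπtc.prodMk continuous_const) (fun t => hmemK t x)
    set x₀ : ℝ := ψ t₀ with hx₀def
    have ht₀mem : t₀ ∈ Set.Ioc a r₀ := ⟨ht₀a, le_of_lt (lt_of_le_of_lt ht₀le ht₀'2)⟩
    have hx₀mem : x₀ ∈ Set.Icc (c-1) (M+1) :=
      ⟨by linarith [Hc t₀ ht₀mem], by linarith [hMb t₀ ht₀mem]⟩
    set Rb : ℝ := C*(t₀ - tMin) + 1 with hRbdef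
    have hpl : IsPicardLindelof vt (tmin := tMin) (tmax := t₀) ⟨t₀, right_mem_Icc.2 htMt₀⟩ x₀ 1 0
        C.toNNReal L.toNNReal :=
      { lipschitzOnWith := fun t _ => (hlip t).lipschitzOnWith
        continuousOn := fun x _ => (hvtcont x).continuousOn
        norm_le := fun t _ x _ => by
          rw [Real.coe_toNNReal C hC0]
          exact le_trans (hC₀ (πt t, πx x) (hmemK t x)) (le_max_left _ _)
        mul_max_le := by
          rw [Real.coe_toNNReal C hC0]
          simp only [sub_self, NNReal.coe_one, NNReal.coe_zero, sub_zero]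
          rw [max_eq_right (sub_nonneg.2 htMt₀)]
          exact hspan }
    obtain ⟨φ, hφ0', hφd⟩ := hpl.exists_eq_forall_mem_Icc_hasDerivWithinAt₀
    have hφ0 : φ t₀ = x₀ := hφ0'
    have hφlip : LipschitzOnWith C.toNNReal φ (Set.Icc tMin t₀) := by
      apply (convex_Icc tMin t₀).lipschitzOnWith_of_nnnorm_hasDerivWithin_le hφd
      intro t ht
      rw [← norm_toNNReal]
      exact Real.toNNReal_mono (le_trans (hC₀ (πt t, πx (φ t)) (hmemK t (φ t))) (le_max_left _ _))
    have hCc : (C.toNNReal : ℝ) = C := Real.coe_toNNReal C hC0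
    have hφball : ∀ t ∈ Set.Icc tMin t₀, φ t ∈ Set.Icc (c-1) (M+1) := by
      intro t ht
      have hdist := (lipschitzOnWith_iff_dist_le_mul.1 hφlip) t ht t₀ (right_mem_Icc.2 htMt₀)
      rw [hφ0, hCc, Real.dist_eq, Real.dist_eq] at hdist
      have habs : |t - t₀| ≤ t₀ - tMin := by
        rw [abs_le]; constructor <;> [linarith [ht.1]; linarith [ht.2, htMt₀]]
      have h1 : |φ t - x₀| ≤ C*(t₀ - tMin) :=
        le_trans hdist (mul_le_mul_of_nonneg_left habs hC0)
      have h2 := abs_le.1 (le_trans h1 hspan)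
      have hx₀c : c ≤ x₀ := by rw [hx₀def]; exact Hc t₀ ht₀mem
      have hx₀M : x₀ ≤ M := by rw [hx₀def]; exact hMb t₀ ht₀mem
      exact ⟨by linarith [h2.1], by linarith [h2.2]⟩
    have hψval : ∀ s ∈ Set.Ioc a t₀, vt s (ψ s) = solitonRHS n k R (ψ s) s := by
      intro s hs
      have hsr : s ∈ Set.Ioc a r₀ := ⟨hs.1, hs.2.trans ht₀mem.2⟩
      show solitonRHS n k R (πx (ψ s)) (πt s) = solitonRHS n k R (ψ s) s
      rw [hπtid s ⟨le_of_lt (htM1.trans hs.1), hs.2⟩,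
        hπxid (ψ s) ⟨by linarith [Hc s hsr], by linarith [hMb s hsr]⟩]
    have hφode : ∀ t ∈ Set.Ioo tMin t₀, HasDerivAt φ (solitonRHS n k R (φ t) t) t := by
      intro t ht
      have h1 := (hφd t (Ioo_subset_Icc_self ht)).hasDerivAt (Icc_mem_nhds ht.1 ht.2)
      have h2 : vt t (φ t) = solitonRHS n k R (φ t) t := by
        show solitonRHS n k R (πx (φ t)) (πt t) = solitonRHS n k R (φ t) t
        rw [hπtid t (Ioo_subset_Icc_self ht), hπxid _ (hφball t (Ioo_subset_Icc_self ht))]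
      rwa [h2] at h1
    have hEq : ∀ t ∈ Set.Ioc a t₀, φ t = ψ t := by
      intro t ht
      have key : Set.EqOn φ ψ (Set.Icc t t₀) := by
        apply ODE_solution_unique_of_mem_Icc_left (v := vt) (s := fun _ => (univ : Set ℝ))
          (fun t _ => (hlip t).lipschitzOnWith)
        · exact hφlip.continuousOn.mono (Icc_subset_Icc (le_of_lt (htM1.trans ht.1)) le_rfl)
        · intro s hs
          have hsIcc : s ∈ Set.Icc tMin t₀ :=
            ⟨le_of_lt (htM1.trans (lt_trans ht.1 hs.1)), hs.2⟩
          apply (hφd s hsIcc).mono_of_mem_nhdsWithin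
          apply mem_nhdsWithin.2
          refine ⟨Set.Ioi tMin, isOpen_Ioi, htM1.trans (lt_trans ht.1 hs.1), ?_⟩
          rintro z ⟨hz1, hz2⟩
          exact ⟨le_of_lt hz1, le_trans hz2 hs.2⟩
        · exact fun s _ => mem_univ _
        · apply hcont.mono
          intro z hz
          exact ⟨lt_of_lt_of_le ht.1 hz.1, lt_of_le_of_lt (le_trans hz.2 ht₀mem.2) hr₀b⟩
        · intro s hs
          have hsm : s ∈ Set.Ioc a t₀ := ⟨lt_trans ht.1 hs.1, hs.2⟩
          have hder := (hψ s (hsub ⟨hsm.1, hsm.2.trans ht₀mem.2⟩)).hasDerivWithinAt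
            (s := Set.Iic s)
          rwa [← hψval s hsm] at hder
        · exact fun s _ => mem_univ _
        · rw [hφ0, hx₀def]
      exact key ⟨le_rfl, ht.2⟩
    refine ⟨(tMin + a)/2, fun t => if t ≤ a then φ t else ψ t,
      by linarith, by linarith [htM2, hw1], ?_, ?_⟩
    · intro t ht
      simp only [if_neg (not_le.2 ht.1)]
    · intro r hr
      by_cases hra : r ≤ a
      · have hrmem : r ∈ Set.Ioo tMin t₀ := ⟨by linarith [hr.1], lt_of_le_of_lt hra ht₀a⟩
        have hEqn : Set.EqOn (fun t => if t ≤ a then φ t else ψ t) φ (Set.Iio t₀) := by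
          intro s hs
          by_cases hcase : s ≤ a
          · simp only [if_pos hcase]
          · push_neg at hcase
            simp only [if_neg (not_le.2 hcase)]
            exact (hEq s ⟨hcase, le_of_lt hs⟩).symm
        have hev : (fun t => if t ≤ a then φ t else ψ t) =ᶠ[𝓝 r] φ :=
          Filter.eventuallyEq_of_mem (Iio_mem_nhds hrmem.2) hEqn
        have h1 := (hφode r hrmem).congr_of_eventuallyEq hev
        have h2 : φ r = (fun t => if t ≤ a then φ t else ψ t) r := by
          simp only [if_pos hra]
        rwa [h2] at h1
      · push_neg at hra
        have hev : (fun t => if t ≤ a then φ t else ψ t) =ᶠ[𝓝 r] ψ := by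
          apply Filter.eventuallyEq_of_mem (Ioi_mem_nhds hra)
          intro s hs
          simp only [if_neg (not_le.2 (mem_Ioi.1 hs))]
        have h1 := (hψ r ⟨hra, hr.2⟩).congr_of_eventuallyEq hev
        have h2 : ψ r = (fun t => if t ≤ a then φ t else ψ t) r := by
          simp only [if_neg (not_le.2 hra)]
        rwa [h2] at h1
end

section
/- Let n ≥ 2, k ≥ 1, R ∈ (-1,1), and suppose ψ solves ψ'(r) = (1/(k(1-r²)))·(ψ(r)²+1)·((n-1)(r-R)·ψ(r) + √(1-r²)) on (-1, b) for some b and extends continuously to r = -1. Then ψ(-1) = 0. Moreover, if V'(r) = ψ(r)/(k√(1-r²)) extends continuously to r = -1, then V'(-1) = 1/(k(k + (n-1)(1+R))). -/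
open Real Set Filter

theorem aux_log_atBot :
    Filter.Tendsto (fun s : ℝ => Real.log (1 + s)) (nhdsWithin (-1) (Set.Ioi (-1:ℝ))) atBot := by
  apply Real.tendsto_log_nhdsGT_zero.comp
  apply tendsto_nhdsWithin_of_tendsto_nhds_of_eventually_within
  · have : Tendsto (fun s : ℝ => 1 + s) (nhds (-1)) (nhds (1 + (-1:ℝ))) :=
      (continuous_const.add continuous_id).tendsto _
    simpa using this.mono_left nhdsWithin_le_nhds
  · filter_upwards [self_mem_nhdsWithin] with s hs
    have : (-1:ℝ) < s := hs
    simp only [Set.mem_Ioi]; linarith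

-- Part A: the limit of ψ at -1 from the right must be 0
set_option maxHeartbeats 1000000 in
theorem aux_psi_zero (n k : ℕ) (hn : 2 ≤ n) (hk : 1 ≤ k) (R b : ℝ)
    (hR : R ∈ Set.Ioo (-1 : ℝ) 1) (hb' : -1 < b)
    (ψ : ℝ → ℝ) (hψ : ∀ r ∈ Set.Ioo (-1 : ℝ) b, HasDerivAt ψ (solitonRHS n k R (ψ r) r) r)
    (hcont : ContinuousWithinAt ψ (Set.Ioi (-1 : ℝ)) (-1)) :
    ψ (-1) = 0 := by
  by_contra hc
  set c := ψ (-1) with hcdef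
  have hk' : (0:ℝ) < k := by exact_mod_cast hk
  have hn' : (1:ℝ) ≤ (n:ℝ) - 1 := by
    have : (2:ℝ) ≤ n := by exact_mod_cast hn
    linarith
  have hRpos : 0 < 1 + R := by linarith [hR.1]
  set l := nhdsWithin (-1 : ℝ) (Set.Ioi (-1 : ℝ)) with hl
  have hψc : Tendsto ψ l (nhds c) := hcont
  clear_value c
  clear_value l
  have hll : l ≤ nhds (-1 : ℝ) := by rw [hl]; exact nhdsWithin_le_nhds
  have hself : Set.Ioi (-1:ℝ) ∈ l := by rw [hl]; exact self_mem_nhdsWithin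
  set A : ℝ := (1/(k:ℝ)) * (c^2+1) * (((n:ℝ)-1) * ((-1)-R) * c) with hA
  clear hcdef
  have hApos : A ≠ 0 := by
    have h1 : (c^2+1) > 0 := by positivity
    have h2 : ((n:ℝ)-1) * ((-1)-R) < 0 := by nlinarith
    rcases lt_or_gt_of_ne hc with h | h
    · apply ne_of_gt; rw [hA]
      have : ((n:ℝ)-1) * ((-1)-R) * c > 0 := mul_pos_of_neg_of_neg h2 h
      positivity
    · apply ne_of_lt; rw [hA]
      apply mul_neg_of_pos_of_neg
      · positivity
      · exact mul_neg_of_neg_of_pos h2 h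
  -- limit of (1-r^2) * ψ'
  have hsqrt0 : Tendsto (fun r : ℝ => Real.sqrt (1 - r^2)) l (nhds 0) := by
    have : Tendsto (fun r : ℝ => Real.sqrt (1 - r^2)) (nhds (-1)) (nhds (Real.sqrt (1 - (-1:ℝ)^2))) := by
      apply Continuous.tendsto
      continuity
    simpa using this.mono_left hll
  have hid : Tendsto (fun r : ℝ => r) l (nhds (-1)) :=
    tendsto_id.mono_left hll
  have hIoo : Set.Ioo (-1:ℝ) (min b 0) ∈ l := by
    rw [hl]
    apply Ioo_mem_nhdsGT_of_mem
    exact ⟨le_refl _, by simp [hb']⟩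
  have hlim : Tendsto (fun r => (1 - r^2) * solitonRHS n k R (ψ r) r) l (nhds A) := by
    have t1 : Tendsto (fun r : ℝ => (ψ r)^2 + 1) l (nhds (c^2+1)) :=
      (hψc.pow 2).add_const 1
    have t2 : Tendsto (fun r : ℝ => ((n:ℝ)-1) * (r-R) * ψ r + Real.sqrt (1 - r^2)) l
        (nhds (((n:ℝ)-1) * ((-1)-R) * c + 0)) :=
      ((tendsto_const_nhds.mul (hid.sub_const R)).mul hψc).add hsqrt0
    have h1 : Tendsto (fun r : ℝ => (1/(k:ℝ)) * ((ψ r)^2+1) * (((n:ℝ)-1) * (r-R) * ψ r + Real.sqrt (1 - r^2))) l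
        (nhds ((1/(k:ℝ)) * (c^2+1) * (((n:ℝ)-1) * ((-1)-R) * c + 0))) :=
      (tendsto_const_nhds.mul t1).mul t2
    have hAeq : A = (1/(k:ℝ)) * (c^2+1) * (((n:ℝ)-1) * ((-1)-R) * c + 0) := by
      rw [hA]; ring
    rw [hAeq]
    apply h1.congr'
    filter_upwards [hIoo] with r hr
    have hr1 : -1 < r := hr.1
    have hr0 : r < 0 := hr.2.trans_le (min_le_right _ _)
    have h0 : (1:ℝ) - r^2 ≠ 0 := by nlinarith
    unfold solitonRHS
    field_simp
  -- sign normalization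
  set σ : ℝ := if 0 < A then 1 else -1 with hσ
  have hσA : σ * A = |A| := by
    rcases lt_or_gt_of_ne hApos with h | h
    · simp [hσ, not_lt.mpr h.le, abs_of_neg h]
    · simp [hσ, h, abs_of_pos h]
  have habs : 0 < |A| := abs_pos.mpr hApos
  clear_value σ
  clear_value A
  clear hσ hA
  have hlimσ : Tendsto (fun r => (1 - r^2) * (σ * solitonRHS n k R (ψ r) r)) l (nhds (|A|)) := by
    have := hlim.const_mul σ
    rw [hσA] at this
    apply this.congr
    intro r; ring
  have hev1 : ∀ᶠ r in l, (1 - r^2) * (σ * solitonRHS n k R (ψ r) r) > |A|/2 :=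
    hlimσ.eventually (eventually_gt_nhds (by linarith))
  have hev2 : ∀ᶠ r in l, r ∈ Set.Ioo (-1:ℝ) (min b 0) := hIoo
  -- extract interval
  have hmem : {r | (1 - r^2) * (σ * solitonRHS n k R (ψ r) r) > |A|/2 ∧ r ∈ Set.Ioo (-1:ℝ) (min b 0)} ∈ l := by
    filter_upwards [hev1, hev2] with r h1 h2; exact ⟨h1, h2⟩
  rw [hl, mem_nhdsGT_iff_exists_Ioo_subset] at hmem
  obtain ⟨δ, hδ, hsub⟩ := hmem
  have hδ1 : -1 < δ := hδ
  set δ' := min δ (min b 0) with hδ'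
  have hδ'1 : -1 < δ' := by
    simp only [hδ', lt_min_iff]
    exact ⟨hδ1, by constructor <;> [exact hb'; norm_num]⟩
  have hprop : ∀ r ∈ Set.Ioo (-1:ℝ) δ', (1 - r^2) * (σ * solitonRHS n k R (ψ r) r) > |A|/2 ∧ r < b ∧ r < 0 := by
    intro r hr
    have h1 : r ∈ Set.Ioo (-1:ℝ) δ := ⟨hr.1, lt_of_lt_of_le hr.2 (min_le_left _ _)⟩
    have h2 := hsub h1
    exact ⟨h2.1, h2.2.2.trans_le (min_le_left _ _), h2.2.2.trans_le (min_le_right _ _)⟩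
  -- monotone function
  set h : ℝ → ℝ := fun r => σ * ψ r - (|A|/4) * Real.log (1 + r) with hh
  have hderiv : ∀ r ∈ Set.Ioo (-1:ℝ) δ', HasDerivAt h (σ * solitonRHS n k R (ψ r) r - (|A|/4) * (1 + r)⁻¹) r := by
    intro r hr
    obtain ⟨_, hrb, hr0⟩ := hprop r hr
    have hd1 : HasDerivAt (fun r => σ * ψ r) (σ * solitonRHS n k R (ψ r) r) r :=
      (hψ r ⟨hr.1, hrb⟩).const_mul σ
    have hne : (1:ℝ) + r ≠ 0 := by linarith [hr.1]
    have hd2 : HasDerivAt (fun r : ℝ => Real.log (1 + r)) ((1 + r)⁻¹) r := by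
      have := (Real.hasDerivAt_log hne).comp r ((hasDerivAt_id r).const_add 1)
      simpa [Function.comp_def] using this
    exact hd1.sub (hd2.const_mul (|A|/4))
  have hmono : MonotoneOn h (Set.Ioo (-1:ℝ) δ') := by
    apply monotoneOn_of_deriv_nonneg (convex_Ioo _ _)
    · exact fun r hr => ((hderiv r hr).continuousAt).continuousWithinAt
    · intro r hr
      rw [interior_Ioo] at hr
      exact (hderiv r hr).differentiableAt.differentiableWithinAt
    · intro r hr
      rw [interior_Ioo] at hr
      rw [(hderiv r hr).deriv]
      obtain ⟨hbig, hrb, hr0⟩ := hprop r hr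
      set Y := σ * solitonRHS n k R (ψ r) r with hY
      clear_value Y
      have hr1 : -1 < r := hr.1
      have h1r : 0 < 1 + r := by linarith
      have hsq : 0 < 1 - r^2 := by nlinarith
      have hYpos : 0 < Y := by nlinarith
      have key : |A|/4 ≤ (1 + r) * Y := by nlinarith
      have : (|A|/4) * (1 + r)⁻¹ ≤ Y := by
        rw [← div_eq_mul_inv, div_le_iff₀ h1r]
        nlinarith
      linarith
  -- contradiction
  set r0 : ℝ := (-1 + δ') / 2 with hr0
  have hr0mem : r0 ∈ Set.Ioo (-1:ℝ) δ' := by constructor <;> (rw [hr0]; linarith)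
  clear_value r0
  have hub : ∀ᶠ s in l, σ * ψ s ≤ h r0 + (|A|/4) * Real.log (1 + s) := by
    have : Set.Ioo (-1:ℝ) r0 ∈ l := by
      rw [hl]; exact Ioo_mem_nhdsGT_of_mem ⟨le_refl _, hr0mem.1⟩
    filter_upwards [this] with s hs
    have hsmem : s ∈ Set.Ioo (-1:ℝ) δ' := ⟨hs.1, hs.2.trans hr0mem.2⟩
    have hmle := hmono hsmem hr0mem hs.2.le
    have hse : h s = σ * ψ s - (|A|/4) * Real.log (1 + s) := rfl
    have hre : h r0 = σ * ψ r0 - (|A|/4) * Real.log (1 + r0) := rfl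
    rw [hse, hre] at hmle
    have hre2 : h r0 = σ * ψ r0 - (|A|/4) * Real.log (1 + r0) := rfl
    rw [hre2]
    linarith
  clear_value h
  have hlog : Tendsto (fun s : ℝ => Real.log (1 + s)) l atBot := by
    rw [hl]; exact aux_log_atBot
  have hRHS : Tendsto (fun s => h r0 + (|A|/4) * Real.log (1 + s)) l atBot := by
    apply tendsto_atBot_add_const_left
    exact (hlog.const_mul_atBot (by positivity))
  have hlb : ∀ᶠ s in l, σ * c - 1 < σ * ψ s :=
    (hψc.const_mul σ).eventually (eventually_gt_nhds (by linarith))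
  have hsmall : ∀ᶠ s in l, h r0 + (|A|/4) * Real.log (1 + s) < σ * c - 1 :=
    hRHS.eventually (eventually_lt_atBot _)
  have : ∀ᶠ s in l, False := by
    filter_upwards [hub, hlb, hsmall] with s h1 h2 h3
    linarith
  have hne : l.NeBot := by
    rw [hl]; exact nhdsGT_neBot _
  obtain ⟨s, hf⟩ := this.exists
  exact hf

set_option maxHeartbeats 1000000 in
theorem stmt_11 (n k : ℕ) (hn : 2 ≤ n) (hk : 1 ≤ k) (R b : ℝ)
    (hR : R ∈ Set.Ioo (-1 : ℝ) 1) (hb : b ≤ 1) (hb' : -1 < b)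
    (ψ : ℝ → ℝ) (hψ : ∀ r ∈ Set.Ioo (-1 : ℝ) b, HasDerivAt ψ (solitonRHS n k R (ψ r) r) r)
    (hcont : ContinuousWithinAt ψ (Set.Ioi (-1 : ℝ)) (-1)) :
    ψ (-1) = 0 ∧
    ∀ L : ℝ, Filter.Tendsto (fun r => ψ r / ((k : ℝ) * Real.sqrt (1 - r ^ 2)))
        (nhdsWithin (-1) (Set.Ioi (-1 : ℝ))) (nhds L) →
      L = 1 / ((k : ℝ) * ((k : ℝ) + ((n : ℝ) - 1) * (1 + R))) := by
  have hzero : ψ (-1) = 0 := aux_psi_zero n k hn hk R b hR hb' ψ hψ hcont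
  refine ⟨hzero, ?_⟩
  intro L hL
  have hk' : (0:ℝ) < k := by exact_mod_cast hk
  have hkne : (k:ℝ) ≠ 0 := ne_of_gt hk'
  have hn' : (1:ℝ) ≤ (n:ℝ) - 1 := by
    have : (2:ℝ) ≤ n := by exact_mod_cast hn
    linarith
  have hRpos : 0 < 1 + R := by linarith [hR.1]
  set l := nhdsWithin (-1 : ℝ) (Set.Ioi (-1 : ℝ)) with hl
  have hψ0 : Tendsto ψ l (nhds 0) := by
    have : Tendsto ψ l (nhds (ψ (-1))) := hcont
    rwa [hzero] at this
  have hll : l ≤ nhds (-1 : ℝ) := by rw [hl]; exact nhdsWithin_le_nhds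
  have hne : l.NeBot := by rw [hl]; exact nhdsGT_neBot _
  have hid : Tendsto (fun r : ℝ => r) l (nhds (-1)) := tendsto_id.mono_left hll
  have hIoo : Set.Ioo (-1:ℝ) (min b 0) ∈ l := by
    rw [hl]
    exact Ioo_mem_nhdsGT_of_mem ⟨le_refl _, by simp [hb']⟩
  -- derivative of g
  set g : ℝ → ℝ := fun r => (k:ℝ) * Real.sqrt (1 - r^2) with hg
  set g' : ℝ → ℝ := fun r => (k:ℝ) * ((-(2*r)) / (2 * Real.sqrt (1 - r^2))) with hg'
  have hgd : ∀ r ∈ Set.Ioo (-1:ℝ) (min b 0), HasDerivAt g (g' r) r := by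
    intro r hr
    have hr1 : -1 < r := hr.1
    have hr0 : r < 0 := hr.2.trans_le (min_le_right _ _)
    have hpos : (0:ℝ) < 1 - r^2 := by nlinarith
    have hd1 : HasDerivAt (fun r : ℝ => 1 - r^2) (-(2*r)) r := by
      have := ((hasDerivAt_pow 2 r).const_sub 1)
      simpa using this
    have := (hd1.sqrt (ne_of_gt hpos)).const_mul (k:ℝ)
    exact this
  have hg'ne : ∀ᶠ r in l, g' r ≠ 0 := by
    filter_upwards [hIoo] with r hr
    have hr1 : -1 < r := hr.1
    have hr0 : r < 0 := hr.2.trans_le (min_le_right _ _)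
    have hpos : (0:ℝ) < 1 - r^2 := by nlinarith
    have hs : 0 < Real.sqrt (1 - r^2) := Real.sqrt_pos.mpr hpos
    have h2r : 0 < -(2*r) := by linarith
    show (k:ℝ) * ((-(2*r)) / (2 * Real.sqrt (1 - r^2))) ≠ 0
    exact ne_of_gt (mul_pos hk' (div_pos h2r (by positivity)))
  have hga : Tendsto g l (nhds 0) := by
    have : Tendsto (fun r : ℝ => (k:ℝ) * Real.sqrt (1 - r^2)) (nhds (-1))
        (nhds ((k:ℝ) * Real.sqrt (1 - (-1:ℝ)^2))) := by
      apply Continuous.tendsto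
      continuity
    have h2 := this.mono_left hll
    simpa using h2
  -- the limit of f'/g'
  have hψs : Tendsto (fun r => ψ r / Real.sqrt (1 - r^2)) l (nhds ((k:ℝ) * L)) := by
    have h1 := hL.const_mul (k:ℝ)
    apply h1.congr
    intro r
    rcases eq_or_ne (Real.sqrt (1 - r^2)) 0 with h | h
    · simp [h]
    · field_simp
  set M : ℝ := (0^2 + 1) * (((n:ℝ)-1) * ((-1)-R) * ((k:ℝ)*L) + 1) / ((k:ℝ)^2 * (-(-1:ℝ))) with hM
  have hdiv : Tendsto (fun x => solitonRHS n k R (ψ x) x / g' x) l (nhds M) := by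
    have t1 : Tendsto (fun r : ℝ => ((ψ r)^2 + 1) * (((n:ℝ)-1) * (r-R) * (ψ r / Real.sqrt (1 - r^2)) + 1)) l
        (nhds ((0^2 + 1) * (((n:ℝ)-1) * ((-1)-R) * ((k:ℝ)*L) + 1))) :=
      ((hψ0.pow 2).add_const 1).mul
        (((tendsto_const_nhds.mul (hid.sub_const R)).mul hψs).add_const 1)
    have t2 : Tendsto (fun r : ℝ => (k:ℝ)^2 * (-r)) l (nhds ((k:ℝ)^2 * (-(-1:ℝ)))) :=
      tendsto_const_nhds.mul hid.neg
    have t3 := t1.div t2 (by positivity)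
    rw [hM]
    apply t3.congr'
    filter_upwards [hIoo] with r hr
    have hr1 : -1 < r := hr.1
    have hr0 : r < 0 := hr.2.trans_le (min_le_right _ _)
    have hpos : (0:ℝ) < 1 - r^2 := by nlinarith
    have hs : 0 < Real.sqrt (1 - r^2) := Real.sqrt_pos.mpr hpos
    simp only [Pi.div_apply]
    set s := Real.sqrt (1 - r^2) with hsdef
    have hs2 : s^2 = 1 - r^2 := Real.sq_sqrt (le_of_lt hpos)
    have hsne : s ≠ 0 := ne_of_gt (by rw [hsdef]; exact Real.sqrt_pos.mpr hpos)
    have hrne : r ≠ 0 := ne_of_lt hr0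
    unfold solitonRHS
    rw [show g' r = (k:ℝ) * ((-(2*r)) / (2 * s)) from rfl]
    rw [← hs2]
    rw [Real.sqrt_sq hs.le]
    field_simp
  -- l'Hôpital
  have hlhop : Tendsto (fun x => ψ x / g x) l (nhds M) := by
    rw [hl]
    apply HasDerivAt.lhopital_zero_nhdsGT (f' := fun x => solitonRHS n k R (ψ x) x) (g' := g')
    · rw [← hl]
      filter_upwards [hIoo] with r hr
      exact hψ r ⟨hr.1, hr.2.trans_le (min_le_left _ _)⟩
    · rw [← hl]
      filter_upwards [hIoo] with r hr
      exact hgd r hr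
    · rw [← hl]; exact hg'ne
    · rw [← hl]; exact hψ0
    · rw [← hl]; exact hga
    · rw [← hl]; exact hdiv
  have hLM : L = M := tendsto_nhds_unique hL hlhop
  rw [hM] at hLM
  have hn2 : (0:ℝ) < (n:ℝ) - 1 := lt_of_lt_of_le one_pos hn'
  have hden : (0:ℝ) < (k:ℝ) * ((k:ℝ) + ((n:ℝ) - 1) * (1 + R)) :=
    mul_pos hk' (add_pos hk' (mul_pos hn2 hRpos))
  have hkk : ((k:ℝ)^2 * (-(-1:ℝ))) ≠ 0 := by
    have : (0:ℝ) < (k:ℝ)^2 * (-(-1:ℝ)) := by norm_num; positivity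
    exact ne_of_gt this
  rw [eq_div_iff hkk] at hLM
  rw [eq_div_iff (ne_of_gt hden)]
  linear_combination hLM
end

section
/- Let n ≥ 2, k ≥ 1, R ∈ (-1,1), and suppose ψ solves ψ'(r) = (1/(k(1-r²)))·(ψ(r)²+1)·((n-1)(r-R)·ψ(r) + √(1-r²)) on (a,1) and extends continuously to r = 1. Then ψ(1) = 0, and if V'(r) = ψ(r)/(k√(1-r²)) extends continuously to r = 1, then V'(1) = -1/(k(k + (n-1)(1-R))). -/
set_option maxHeartbeats 1000000

open Real Set Filter

lemma no_blow (ψ ψ' : ℝ → ℝ) (a : ℝ) (ha' : a < 1)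
    (hd : ∀ r ∈ Set.Ioo a (1:ℝ), HasDerivAt ψ (ψ' r) r)
    (c B : ℝ) (hB : 0 < B)
    (hlow : ∀ᶠ r in nhdsWithin 1 (Set.Iio (1:ℝ)), B / (1 - r) ≤ ψ' r)
    (hlim : Filter.Tendsto ψ (nhdsWithin 1 (Set.Iio (1:ℝ))) (nhds c)) : False := by
  rw [eventually_iff_exists_mem] at hlow
  obtain ⟨s, hs, hsl⟩ := hlow
  rw [mem_nhdsLT_iff_exists_Ioo_subset] at hs
  obtain ⟨l, hl1, hls⟩ := hs
  set r₀ : ℝ := max l a with hr₀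
  have hr₀1 : r₀ < 1 := max_lt hl1 ha'
  set r₁ : ℝ := (r₀ + 1) / 2 with hr₁
  have hr₀r₁ : r₀ < r₁ := by simp only [hr₁]; linarith
  have hr₁1 : r₁ < 1 := by simp only [hr₁]; linarith
  set h : ℝ → ℝ := fun r => ψ r + B * Real.log (1 - r) with hh
  have hmem : ∀ x ∈ Set.Ioo r₀ (1:ℝ), x ∈ Set.Ioo a (1:ℝ) ∧ x ∈ Set.Ioo l (1:ℝ) := by
    intro x hx
    exact ⟨⟨lt_of_le_of_lt (le_max_right l a) hx.1, hx.2⟩,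
      ⟨lt_of_le_of_lt (le_max_left l a) hx.1, hx.2⟩⟩
  have hderiv : ∀ x ∈ Set.Ioo r₀ (1:ℝ), HasDerivAt h (ψ' x - B / (1 - x)) x := by
    intro x hx
    have hx1 : (1:ℝ) - x ≠ 0 := by have := hx.2; intro h0; linarith
    have h1 : HasDerivAt (fun r : ℝ => 1 - r) (-1) x := (hasDerivAt_id x).const_sub 1
    have h2 : HasDerivAt (fun r : ℝ => Real.log (1 - r)) ((1 - x)⁻¹ * -1) x :=
      (Real.hasDerivAt_log hx1).comp x h1
    have h3 := (hd x (hmem x hx).1).add (h2.const_mul B)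
    refine h3.congr_deriv ?_
    field_simp
    ring
  have hmono : MonotoneOn h (Set.Ico r₁ 1) := by
    apply monotoneOn_of_deriv_nonneg (convex_Ico r₁ 1)
    · intro x hx
      have hx' : x ∈ Set.Ioo r₀ (1:ℝ) := ⟨lt_of_lt_of_le hr₀r₁ hx.1, hx.2⟩
      exact (hderiv x hx').differentiableAt.continuousAt.continuousWithinAt
    · intro x hx
      rw [interior_Ico] at hx
      exact ((hderiv x ⟨lt_trans hr₀r₁ hx.1, hx.2⟩).differentiableAt).differentiableWithinAt
    · intro x hx
      rw [interior_Ico] at hx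
      have hx' : x ∈ Set.Ioo r₀ (1:ℝ) := ⟨lt_trans hr₀r₁ hx.1, hx.2⟩
      rw [(hderiv x hx').deriv]
      have := hsl x (hls (hmem x hx').2)
      linarith
  have hev : ∀ᶠ x in nhdsWithin 1 (Set.Iio (1:ℝ)),
      h r₁ - B * Real.log (1 - x) ≤ ψ x := by
    filter_upwards [Ioo_mem_nhdsLT_of_mem (⟨hr₁1, le_refl 1⟩ : (1:ℝ) ∈ Set.Ioc r₁ 1)]
      with x hx
    have := hmono ⟨le_refl r₁, hr₁1⟩ ⟨le_of_lt hx.1, hx.2⟩ (le_of_lt hx.1)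
    simp only [hh] at this ⊢
    linarith
  have hlog : Filter.Tendsto (fun x : ℝ => Real.log (1 - x))
      (nhdsWithin 1 (Set.Iio (1:ℝ))) atBot := by
    apply Real.tendsto_log_nhdsGT_zero.comp
    apply tendsto_nhdsWithin_of_tendsto_nhds_of_eventually_within
    · have hc : ContinuousAt (fun x : ℝ => 1 - x) 1 := by fun_prop
      have : Filter.Tendsto (fun x : ℝ => 1 - x) (nhds (1:ℝ)) (nhds (0:ℝ)) := by
        simpa using hc.tendsto
      exact this.mono_left nhdsWithin_le_nhds
    · filter_upwards [self_mem_nhdsWithin] with x hx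
      simp only [Set.mem_Iio] at hx
      simp only [Set.mem_Ioi]
      linarith
  have hdiv : Filter.Tendsto (fun x : ℝ => h r₁ - B * Real.log (1 - x))
      (nhdsWithin 1 (Set.Iio (1:ℝ))) atTop := by
    have h1 : Filter.Tendsto (fun x : ℝ => B * Real.log (1 - x))
        (nhdsWithin 1 (Set.Iio (1:ℝ))) atBot := hlog.const_mul_atBot hB
    have h2 := tendsto_neg_atBot_atTop.comp h1
    have h3 : Filter.Tendsto (fun x : ℝ => -(B * Real.log (1 - x)))
        (nhdsWithin 1 (Set.Iio (1:ℝ))) atTop := h2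
    have := tendsto_atTop_add_const_left _ (h r₁) h3
    simpa [sub_eq_add_neg] using this
  exact not_tendsto_atTop_of_tendsto_nhds hlim (tendsto_atTop_mono' _ hev hdiv)

theorem stmt_12 (n k : ℕ) (hn : 2 ≤ n) (hk : 1 ≤ k) (R a : ℝ)
    (hR : R ∈ Set.Ioo (-1 : ℝ) 1) (ha : -1 ≤ a) (ha' : a < 1)
    (ψ : ℝ → ℝ) (hψ : ∀ r ∈ Set.Ioo a (1 : ℝ), HasDerivAt ψ (solitonRHS n k R (ψ r) r) r)
    (hcont : ContinuousWithinAt ψ (Set.Iio (1 : ℝ)) 1) :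
    ψ 1 = 0 ∧
    ∀ L : ℝ, Filter.Tendsto (fun r => ψ r / ((k : ℝ) * Real.sqrt (1 - r ^ 2)))
        (nhdsWithin 1 (Set.Iio (1 : ℝ))) (nhds L) →
      L = -(1 / ((k : ℝ) * ((k : ℝ) + ((n : ℝ) - 1) * (1 - R)))) := by
  have hk0 : (0:ℝ) < (k:ℝ) := by exact_mod_cast Nat.lt_of_lt_of_le Nat.zero_lt_one hk
  have hn2 : (2:ℝ) ≤ (n:ℝ) := by exact_mod_cast hn
  have hn1 : (1:ℝ) ≤ (n:ℝ) - 1 := by linarith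
  have hR1 : (0:ℝ) < 1 - R := by linarith [hR.2]
  set c : ℝ := ψ 1 with hc
  have hlim : Filter.Tendsto ψ (nhdsWithin 1 (Set.Iio (1:ℝ))) (nhds c) := hcont
  have hr1 : Filter.Tendsto (fun r : ℝ => r) (nhdsWithin 1 (Set.Iio (1:ℝ))) (nhds 1) :=
    tendsto_id.mono_left nhdsWithin_le_nhds
  have hsqrt : Filter.Tendsto (fun r : ℝ => Real.sqrt (1 - r ^ 2))
      (nhdsWithin 1 (Set.Iio (1:ℝ))) (nhds 0) := by
    have hc' : ContinuousAt (fun r : ℝ => Real.sqrt (1 - r ^ 2)) 1 := by fun_prop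
    have := hc'.tendsto.mono_left (nhdsWithin_le_nhds (s := Set.Iio (1:ℝ)))
    simpa using this
  set G : ℝ → ℝ := fun r => (ψ r ^ 2 + 1) * (((n:ℝ) - 1) * (r - R) * ψ r
      + Real.sqrt (1 - r ^ 2)) with hGdef
  set P : ℝ := (c ^ 2 + 1) * (((n:ℝ) - 1) * (1 - R) * c) with hP
  have hG : Filter.Tendsto G (nhdsWithin 1 (Set.Iio (1:ℝ))) (nhds P) := by
    have h1 : Filter.Tendsto (fun r => ψ r ^ 2 + 1)
        (nhdsWithin 1 (Set.Iio (1:ℝ))) (nhds (c ^ 2 + 1)) :=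
      (hlim.pow 2).add tendsto_const_nhds
    have h2 : Filter.Tendsto (fun r => ((n:ℝ) - 1) * (r - R) * ψ r + Real.sqrt (1 - r ^ 2))
        (nhdsWithin 1 (Set.Iio (1:ℝ))) (nhds (((n:ℝ) - 1) * (1 - R) * c + 0)) :=
      ((tendsto_const_nhds.mul (hr1.sub tendsto_const_nhds)).mul hlim).add hsqrt
    have := h1.mul h2
    simpa using this
  have hIoo : Set.Ioo (max a 0) 1 ∈ nhdsWithin 1 (Set.Iio (1:ℝ)) :=
    Ioo_mem_nhdsLT_of_mem ⟨max_lt ha' one_pos, le_refl 1⟩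
  -- key quantitative facts on Ioo (max a 0) 1
  have hbasic : ∀ r ∈ Set.Ioo (max a 0) (1:ℝ), 0 < r ∧ r < 1 ∧ (0:ℝ) < 1 - r ^ 2 ∧
      ((k:ℝ) * (1 - r ^ 2)) ≤ 2 * (k:ℝ) * (1 - r) := by
    intro r hr
    have h0 : 0 < r := lt_of_le_of_lt (le_max_right a 0) hr.1
    have h1 : r < 1 := hr.2
    refine ⟨h0, h1, by nlinarith, ?_⟩
    nlinarith [mul_nonneg (mul_nonneg hk0.le (sub_nonneg.2 h1.le)) (sub_nonneg.2 h1.le)]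
  have hψ1 : ψ 1 = 0 := by
    by_contra hcne
    rcases lt_or_gt_of_ne hcne with hneg | hpos
    · -- c < 0
      have hPneg : P < 0 := by
        rw [hP]
        apply mul_neg_of_pos_of_neg (by positivity)
        exact mul_neg_of_pos_of_neg (by nlinarith) hneg
      set B : ℝ := -P / (4 * (k:ℝ)) with hB
      have hBpos : 0 < B := by
        rw [hB]; exact div_pos (by linarith) (by positivity)
      have hlow : ∀ᶠ r in nhdsWithin 1 (Set.Iio (1:ℝ)),
          B / (1 - r) ≤ -(solitonRHS n k R (ψ r) r) := by
        filter_upwards [hG.eventually (eventually_lt_nhds (by linarith : P < P / 2)), hIoo]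
          with r h1 h2
        obtain ⟨hr0, hr1', hsq, hcmp⟩ := hbasic r h2
        have e3 : -(solitonRHS n k R (ψ r) r) = 1 / ((k:ℝ) * (1 - r ^ 2)) * (-G r) := by
          simp only [solitonRHS, hGdef]; ring
        rw [e3]
        have e1 : 1 / (2 * (k:ℝ) * (1 - r)) ≤ 1 / ((k:ℝ) * (1 - r ^ 2)) :=
          one_div_le_one_div_of_le (by positivity) hcmp
        have e2 : 1 / (2 * (k:ℝ) * (1 - r)) * (-P / 2) ≤ 1 / ((k:ℝ) * (1 - r ^ 2)) * (-G r) :=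
          mul_le_mul e1 (by linarith) (by linarith) (by positivity)
        have e4 : B / (1 - r) = 1 / (2 * (k:ℝ) * (1 - r)) * (-P / 2) := by
          rw [hB]; field_simp; ring
        linarith [e4 ▸ e2]
      exact no_blow (fun x => -ψ x) (fun r => -(solitonRHS n k R (ψ r) r)) a ha'
        (fun r hr => (hψ r hr).neg) (-c) B hBpos hlow hlim.neg
    · -- c > 0
      have hPpos : 0 < P := by
        rw [hP]
        apply mul_pos (by positivity)
        exact mul_pos (by nlinarith) hpos
      set B : ℝ := P / (4 * (k:ℝ)) with hB
      have hBpos : 0 < B := by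
        rw [hB]; exact div_pos (by linarith) (by positivity)
      have hlow : ∀ᶠ r in nhdsWithin 1 (Set.Iio (1:ℝ)),
          B / (1 - r) ≤ solitonRHS n k R (ψ r) r := by
        filter_upwards [hG.eventually (eventually_gt_nhds (by linarith : P / 2 < P)), hIoo]
          with r h1 h2
        obtain ⟨hr0, hr1', hsq, hcmp⟩ := hbasic r h2
        have e3 : solitonRHS n k R (ψ r) r = 1 / ((k:ℝ) * (1 - r ^ 2)) * G r := by
          simp only [solitonRHS, hGdef]; ring
        rw [e3]
        have e1 : 1 / (2 * (k:ℝ) * (1 - r)) ≤ 1 / ((k:ℝ) * (1 - r ^ 2)) :=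
          one_div_le_one_div_of_le (by positivity) hcmp
        have e2 : 1 / (2 * (k:ℝ) * (1 - r)) * (P / 2) ≤ 1 / ((k:ℝ) * (1 - r ^ 2)) * (G r) :=
          mul_le_mul e1 (by linarith) (by linarith) (by positivity)
        have e4 : B / (1 - r) = 1 / (2 * (k:ℝ) * (1 - r)) * (P / 2) := by
          rw [hB]; field_simp; ring
        linarith [e4 ▸ e2]
      exact no_blow ψ (fun r => solitonRHS n k R (ψ r) r) a ha'
        hψ c B hBpos hlow hlim
  refine ⟨hψ1, ?_⟩
  intro L hL
  have hlim0 : Filter.Tendsto ψ (nhdsWithin 1 (Set.Iio (1:ℝ))) (nhds 0) := hψ1 ▸ hlim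
  -- the denominator function and its derivative
  set g : ℝ → ℝ := fun r => (k:ℝ) * Real.sqrt (1 - r ^ 2) with hg
  set g' : ℝ → ℝ := fun r => (k:ℝ) * (-r / Real.sqrt (1 - r ^ 2)) with hg'
  have hgderiv : ∀ r ∈ Set.Ioo (max a 0) (1:ℝ), HasDerivAt g (g' r) r := by
    intro r hr
    obtain ⟨hr0, hr1', hsq, _⟩ := hbasic r hr
    have hne : (1:ℝ) - r ^ 2 ≠ 0 := ne_of_gt hsq
    have h1 : HasDerivAt (fun x : ℝ => 1 - x ^ 2) (-(2 * r)) r := by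
      have := ((hasDerivAt_pow 2 r).const_sub 1)
      simpa using this
    have h2 : HasDerivAt (fun x : ℝ => Real.sqrt (1 - x ^ 2))
        (1 / (2 * Real.sqrt (1 - r ^ 2)) * -(2 * r)) r :=
      (Real.hasDerivAt_sqrt hne).comp r h1
    have h3 := h2.const_mul (k:ℝ)
    refine h3.congr_deriv ?_
    have hs0 : Real.sqrt (1 - r ^ 2) ≠ 0 := Real.sqrt_ne_zero'.mpr hsq
    simp only [hg']
    field_simp
  have hff' : ∀ᶠ r in nhdsWithin 1 (Set.Iio (1:ℝ)),
      HasDerivAt ψ (solitonRHS n k R (ψ r) r) r := by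
    filter_upwards [hIoo] with r hr
    exact hψ r ⟨lt_of_le_of_lt (le_max_left a 0) hr.1, hr.2⟩
  have hgg' : ∀ᶠ r in nhdsWithin 1 (Set.Iio (1:ℝ)), HasDerivAt g (g' r) r := by
    filter_upwards [hIoo] with r hr
    exact hgderiv r hr
  have hg'ne : ∀ᶠ r in nhdsWithin 1 (Set.Iio (1:ℝ)), g' r ≠ 0 := by
    filter_upwards [hIoo] with r hr
    obtain ⟨hr0, hr1', hsq, _⟩ := hbasic r hr
    have hs : 0 < Real.sqrt (1 - r ^ 2) := Real.sqrt_pos.mpr hsq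
    simp only [hg']
    have : -r / Real.sqrt (1 - r ^ 2) < 0 := div_neg_of_neg_of_pos (by linarith) hs
    exact ne_of_lt (mul_neg_of_pos_of_neg hk0 this)
  have hg0 : Filter.Tendsto g (nhdsWithin 1 (Set.Iio (1:ℝ))) (nhds 0) := by
    have := hsqrt.const_mul (k:ℝ)
    simpa [hg] using this
  -- the limit of f'/g'
  set M : ℝ := -((0 ^ 2 + 1) * (((n:ℝ) - 1) * (1 - R) * ((k:ℝ) * L) + 1)) / ((k:ℝ) ^ 2 * 1)
    with hM
  have hdivlim : Filter.Tendsto (fun r => solitonRHS n k R (ψ r) r / g' r)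
      (nhdsWithin 1 (Set.Iio (1:ℝ))) (nhds M) := by
    have hE : Filter.Tendsto (fun r => -((ψ r ^ 2 + 1) *
        (((n:ℝ) - 1) * (r - R) * ((k:ℝ) * (ψ r / ((k:ℝ) * Real.sqrt (1 - r ^ 2)))) + 1)) /
        ((k:ℝ) ^ 2 * r)) (nhdsWithin 1 (Set.Iio (1:ℝ))) (nhds M) := by
      rw [hM]
      have e1 : Filter.Tendsto (fun r => ψ r ^ 2 + 1)
          (nhdsWithin 1 (Set.Iio (1:ℝ))) (nhds ((0:ℝ) ^ 2 + 1)) :=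
        (hlim0.pow 2).add tendsto_const_nhds
      have e2 : Filter.Tendsto (fun r => ((n:ℝ) - 1) * (r - R) *
          ((k:ℝ) * (ψ r / ((k:ℝ) * Real.sqrt (1 - r ^ 2)))) + 1)
          (nhdsWithin 1 (Set.Iio (1:ℝ)))
          (nhds (((n:ℝ) - 1) * (1 - R) * ((k:ℝ) * L) + 1)) :=
        ((tendsto_const_nhds.mul (hr1.sub tendsto_const_nhds)).mul
            (hL.const_mul (k:ℝ))).add tendsto_const_nhds
      have e3 : Filter.Tendsto (fun r : ℝ => (k:ℝ) ^ 2 * r)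
          (nhdsWithin 1 (Set.Iio (1:ℝ))) (nhds ((k:ℝ) ^ 2 * 1)) :=
        tendsto_const_nhds.mul hr1
      exact ((e1.mul e2).neg).div e3 (by positivity)
    apply hE.congr'
    filter_upwards [hIoo] with r hr
    obtain ⟨hr0, hr1', hsq, _⟩ := hbasic r hr
    have hs : 0 < Real.sqrt (1 - r ^ 2) := Real.sqrt_pos.mpr hsq
    have hss : Real.sqrt (1 - r ^ 2) ^ 2 = 1 - r ^ 2 := Real.sq_sqrt (le_of_lt hsq)
    simp only [solitonRHS, hg']
    set sq : ℝ := Real.sqrt (1 - r ^ 2) with hsq'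
    rw [← hss]
    have hkne : (k:ℝ) ≠ 0 := ne_of_gt hk0
    field_simp
  have hlhop := HasDerivAt.lhopital_zero_nhdsLT hff' hgg' hg'ne hlim0 hg0 hdivlim
  have hLM : L = M := tendsto_nhds_unique hL (by simpa [hg] using hlhop)
  have hden : (0:ℝ) < (k:ℝ) + ((n:ℝ) - 1) * (1 - R) := by positivity
  rw [hM] at hLM
  have hkne : (k:ℝ) ≠ 0 := ne_of_gt hk0
  field_simp at hLM ⊢
  nlinarith [hLM]
end

section
/- Let n ≥ 2, k ≥ 1, R ∈ (-1,1), and let ψ be a maximal solution of ψ'(r) = (1/(k(1-r²)))·(ψ(r)²+1)·((n-1)(r-R)·ψ(r) + √(1-r²)) on a subinterval of (-1,1). If there exists r₀ ∈ (-1,R) with ψ(r₀) < 0, then there exists r₁ ∈ (-1,r₀) such that ψ(r) → -∞ as r ↓ r₁. -/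
open Real Set Filter

lemma soliton_contDiffAt (n k : ℕ) (R t₀ L : ℝ) (h1 : 1 - t₀ ^ 2 ≠ 0) (hk : (k : ℝ) ≠ 0) :
    ContDiffAt ℝ 1 (fun p : ℝ × ℝ => solitonRHS n k R p.2 p.1) (t₀, L) := by
  unfold solitonRHS
  have hden : ContDiffAt ℝ 1 (fun p : ℝ × ℝ => (k : ℝ) * (1 - p.1 ^ 2)) (t₀, L) := by fun_prop
  apply ContDiffAt.mul
  · apply ContDiffAt.mul
    · exact ContDiffAt.div contDiffAt_const hden (mul_ne_zero hk h1)
    · fun_prop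
  · apply ContDiffAt.add
    · fun_prop
    · have hin : ContDiffAt ℝ 1 (fun p : ℝ × ℝ => 1 - p.1 ^ 2) (t₀, L) :=
        contDiffAt_const.sub (contDiffAt_fst.pow 2)
      exact (Real.contDiffAt_sqrt h1).comp (t₀, L) hin

lemma soliton_local_sol (n k : ℕ) (R t₀ L : ℝ) (h1 : 1 - t₀ ^ 2 ≠ 0) (hk : (k : ℝ) ≠ 0) :
    ∃ φ : ℝ → ℝ, φ t₀ = L ∧ ∃ ε > 0, ∀ t ∈ Ioo (t₀ - ε) (t₀ + ε),
      HasDerivAt φ (solitonRHS n k R (φ t) t) t := by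
  set V : ℝ × ℝ → ℝ × ℝ := fun p => (1, solitonRHS n k R p.2 p.1) with hV
  have hVc : ContDiffAt ℝ 1 V (t₀, L) :=
    contDiffAt_const.prodMk (soliton_contDiffAt n k R t₀ L h1 hk)
  obtain ⟨γ, hγ0, ε, hε, hγ⟩ := ContDiffAt.exists_forall_mem_closedBall_exists_eq_forall_mem_Ioo_hasDerivAt₀ hVc t₀
  -- first components
  have hγ1 : ∀ t ∈ Ioo (t₀ - ε) (t₀ + ε), HasDerivAt (fun s => (γ s).1) 1 t := by
    intro t ht
    have := ((ContinuousLinearMap.fst ℝ ℝ ℝ).hasFDerivAt).comp_hasDerivAt t (hγ t ht)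
    simpa [hV, Function.comp_def] using this
  have hγ2 : ∀ t ∈ Ioo (t₀ - ε) (t₀ + ε),
      HasDerivAt (fun s => (γ s).2) (solitonRHS n k R (γ t).2 (γ t).1) t := by
    intro t ht
    have := ((ContinuousLinearMap.snd ℝ ℝ ℝ).hasFDerivAt).comp_hasDerivAt t (hγ t ht)
    simpa [hV, Function.comp_def] using this
  -- the first component is the identity
  have hid : ∀ t ∈ Ioo (t₀ - ε) (t₀ + ε), (γ t).1 = t := by
    intro t ht
    set g : ℝ → ℝ := fun s => (γ s).1 - s with hg
    have hg' : ∀ s ∈ Ioo (t₀ - ε) (t₀ + ε), HasDerivAt g 0 s := by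
      intro s hs
      have h := (hγ1 s hs).sub (hasDerivAt_id s); rw [sub_self] at h; exact h
    have ht₀mem : t₀ ∈ Ioo (t₀ - ε) (t₀ + ε) := by constructor <;> linarith
    have hgt₀ : g t₀ = 0 := by simp [hg, hγ0]
    have key : g t = 0 := by
      rcases le_total t₀ t with h | h
      · have hsub : Icc t₀ t ⊆ Ioo (t₀ - ε) (t₀ + ε) := fun x hx =>
          ⟨by linarith [hx.1], lt_of_le_of_lt hx.2 ht.2⟩
        have := constant_of_has_deriv_right_zero
          (fun x hx => ((hg' x (hsub hx)).continuousAt).continuousWithinAt)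
          (fun x hx => (hg' x (hsub (Ico_subset_Icc_self hx))).hasDerivWithinAt)
          t (by constructor <;> linarith)
        rw [this, hgt₀]
      · have hsub : Icc t t₀ ⊆ Ioo (t₀ - ε) (t₀ + ε) := fun x hx =>
          ⟨lt_of_lt_of_le ht.1 hx.1, by linarith [hx.2]⟩
        have := constant_of_has_deriv_right_zero
          (fun x hx => ((hg' x (hsub hx)).continuousAt).continuousWithinAt)
          (fun x hx => (hg' x (hsub (Ico_subset_Icc_self hx))).hasDerivWithinAt)
          t₀ (by constructor <;> linarith)
        rw [this] at hgt₀; exact hgt₀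
    have : (γ t).1 - t = 0 := key
    linarith
  refine ⟨fun s => (γ s).2, by simp [hγ0], ε, hε, fun t ht => ?_⟩
  have := hγ2 t ht
  rwa [hid t ht] at this

lemma eventually_gt_of_hasDerivAt_pos {f : ℝ → ℝ} {d x : ℝ} (h : HasDerivAt f d x)
    (hd : 0 < d) : ∀ᶠ t in nhdsWithin x (Ioi x), f x < f t := by
  rw [hasDerivAt_iff_tendsto_slope] at h
  have h2 : Tendsto (slope f x) (nhdsWithin x (Ioi x)) (nhds d) :=
    h.mono_left (nhdsWithin_mono x fun y hy => ne_of_gt hy)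
  have h3 : ∀ᶠ t in nhdsWithin x (Ioi x), 0 < slope f x t :=
    h2.eventually (eventually_gt_nhds hd)
  filter_upwards [h3, self_mem_nhdsWithin] with t hslope (hmem : t ∈ Ioi x)
  have hx : 0 < t - x := sub_pos.2 hmem
  rw [slope_def_field] at hslope
  rcases div_pos_iff.1 hslope with ⟨h1, _⟩ | ⟨_, h2⟩
  · linarith
  · linarith


lemma soliton_key_ineq (kr δ C u B t sol : ℝ) (hkpos : 0 < kr) (hδ : 0 < δ) (hC : 0 < C)
    (hCdef : C = δ/(2*kr))
    (hu : u < 0) (hune : u ≠ 0) (h1r : 0 < 1+t) (h2 : 0 < 1 - t^2)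
    (hv : sol = (u^2+1)*B/(kr*(1-t^2)))
    (hB : δ * (-u) ≤ B) (hB0 : 0 ≤ B) :
    sol / u^3 + C/(1+t) ≤ 0 := by
  have hden : 0 < kr*(1-t^2) := mul_pos hkpos h2
  have key : C * (-u^3) ≤ sol * (1+t) := by
    rw [hv, div_mul_eq_mul_div ((u^2+1)*B) (kr*(1-t^2)) (1+t), le_div_iff₀ hden]
    have f1 : δ * (-u)^3 ≤ (u^2+1) * B := by
      nlinarith [sq_nonneg u, mul_le_mul_of_nonneg_left hB (sq_nonneg u), hB0]
    have f2 : (1:ℝ) - t^2 ≤ 2*(1+t) := by nlinarith [sq_nonneg (1+t)]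
    have f3 : δ*(-u)^3*(1-t^2) ≤ ((u^2+1)*B)*(2*(1+t)) :=
      mul_le_mul f1 f2 (by linarith) (mul_nonneg (by positivity) hB0)
    have f4 : C*(-u^3)*(kr*(1-t^2)) = (δ*(-u)^3*(1-t^2))/2 := by
      rw [hCdef]
      field_simp
    rw [f4]
    linarith
  have hu3 : u^3 < 0 := by nlinarith [mul_pos (mul_pos (neg_pos.2 hu) (neg_pos.2 hu)) (neg_pos.2 hu)]
  have hnum : 0 ≤ sol * (1+t) + u^3 * C := by nlinarith [key]
  have hrepr : sol / u^3 + C/(1+t) = (sol * (1+t) + u^3 * C)/(u^3*(1+t)) :=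
    div_add_div _ _ (ne_of_lt hu3) (ne_of_gt h1r)
  rw [hrepr]
  exact div_nonpos_of_nonneg_of_nonpos hnum (le_of_lt (mul_neg_of_neg_of_pos hu3 h1r))

set_option maxHeartbeats 1000000 in
theorem stmt_19 (n k : ℕ) (hn : 2 ≤ n) (hk : 1 ≤ k) (R a b : ℝ)
    (hR : R ∈ Set.Ioo (-1 : ℝ) 1) (hab : Set.Ioo a b ⊆ Set.Ioo (-1 : ℝ) 1)
    (ψ : ℝ → ℝ) (hψ : ∀ r ∈ Set.Ioo a b, HasDerivAt ψ (solitonRHS n k R (ψ r) r) r)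
    (hmax : ¬ ∃ (a' : ℝ) (φ : ℝ → ℝ), a' < a ∧ -1 ≤ a' ∧ Set.EqOn φ ψ (Set.Ioo a b) ∧
      ∀ r ∈ Set.Ioo a' b, HasDerivAt φ (solitonRHS n k R (φ r) r) r)
    (r₀ : ℝ) (hr₀ab : r₀ ∈ Set.Ioo a b) (hr₀R : r₀ ∈ Set.Ioo (-1 : ℝ) R)
    (hneg : ψ r₀ < 0) :
    ∃ r₁ ∈ Set.Ioo (-1 : ℝ) r₀,
      Filter.Tendsto ψ (nhdsWithin r₁ (Set.Ioi r₁)) Filter.atBot := by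
  obtain ⟨hr₀a, hr₀b⟩ := hr₀ab
  obtain ⟨hr₀m1, hr₀R'⟩ := hr₀R
  obtain ⟨hRm1, hR1⟩ := hR
  have hkpos : (0:ℝ) < (k:ℝ) := by exact_mod_cast hk
  have hk0 : (k:ℝ) ≠ 0 := ne_of_gt hkpos
  have hn1 : (1:ℝ) ≤ (n:ℝ) - 1 := by
    have : (2:ℝ) ≤ (n:ℝ) := by exact_mod_cast hn
    linarith
  have ham1 : -1 ≤ a := by
    by_contra h
    push_neg at h
    have ht : (a-1)/2 ∈ Set.Ioo a b := by
      constructor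
      · linarith
      · have : (a-1)/2 < -1 := by linarith
        linarith
    have := (hab ht).1
    linarith
  have hIoo : Set.Ioc a r₀ ⊆ Set.Ioo a b :=
    fun r hr => ⟨hr.1, lt_of_le_of_lt hr.2 hr₀b⟩
  -- Step 1: ψ is negative on (a, r₀]
  have hnegall : ∀ r ∈ Set.Ioc a r₀, ψ r < 0 := by
    by_contra hcon
    push_neg at hcon
    obtain ⟨x, hx, hx0⟩ := hcon
    have hxr₀ : x < r₀ := lt_of_le_of_ne hx.2 (by rintro rfl; linarith)
    have hIccsub : Set.Icc x r₀ ⊆ Set.Ioo a b := fun r hr =>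
      ⟨lt_of_lt_of_le hx.1 hr.1, lt_of_le_of_lt hr.2 hr₀b⟩
    have hZne : (Set.Icc x r₀ ∩ ψ ⁻¹' (Set.Ici 0)).Nonempty := ⟨x, ⟨le_refl x, hx.2⟩, hx0⟩
    have hcontZ : ContinuousOn ψ (Set.Icc x r₀) := fun r hr =>
      ((hψ r (hIccsub hr)).continuousAt).continuousWithinAt
    have hZclosed : IsClosed (Set.Icc x r₀ ∩ ψ ⁻¹' (Set.Ici 0)) :=
      hcontZ.preimage_isClosed_of_isClosed isClosed_Icc isClosed_Ici
    have hZcpt : IsCompact (Set.Icc x r₀ ∩ ψ ⁻¹' (Set.Ici 0)) :=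
      isCompact_Icc.of_isClosed_subset hZclosed Set.inter_subset_left
    obtain ⟨s, hsZ, hsub⟩ := hZcpt.exists_isGreatest hZne
    obtain ⟨hsIcc, hs0⟩ := hsZ
    have hs0' : (0:ℝ) ≤ ψ s := hs0
    have hsr₀ : s < r₀ := lt_of_le_of_ne hsIcc.2 (by rintro rfl; linarith)
    have hslt : ∀ t, s < t → t ≤ r₀ → ψ t < 0 := by
      intro t hst htr
      by_contra hcon2
      push_neg at hcon2
      have htZ : t ∈ Set.Icc x r₀ ∩ ψ ⁻¹' (Set.Ici 0) :=
        ⟨⟨le_trans hsIcc.1 (le_of_lt hst), htr⟩, hcon2⟩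
      exact absurd (hsub htZ) (not_le.2 hst)
    have hsab : s ∈ Set.Ioo a b := hIccsub hsIcc
    have hψs : ψ s = 0 := by
      refine le_antisymm ?_ hs0'
      have htend : Tendsto ψ (nhdsWithin s (Set.Ioi s)) (nhds (ψ s)) :=
        ((hψ s hsab).continuousAt).continuousWithinAt
      have hev : ∀ᶠ t in nhdsWithin s (Set.Ioi s), ψ t ≤ 0 := by
        filter_upwards [Ioc_mem_nhdsGT_of_mem ⟨le_refl s, hsr₀⟩] with t ht
        exact le_of_lt (hslt t ht.1 ht.2)
      exact le_of_tendsto htend hev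
    have hs1 : -1 < s ∧ s < 1 := ⟨(hab hsab).1, (hab hsab).2⟩
    have h2 : 0 < 1 - s^2 := by nlinarith [hs1.1, hs1.2]
    have hds : 0 < solitonRHS n k R (ψ s) s := by
      rw [hψs]
      unfold solitonRHS
      have e : ((n:ℝ)-1)*(s-R)*0 + Real.sqrt (1-s^2) = Real.sqrt (1-s^2) := by ring
      rw [e]
      have h3 : 0 < Real.sqrt (1-s^2) := Real.sqrt_pos.2 h2
      have h4 : 0 < 1 / ((k:ℝ)*(1-s^2)) := one_div_pos.2 (mul_pos hkpos h2)
      have h5 : (0:ℝ) < (0:ℝ)^2 + 1 := by norm_num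
      exact mul_pos (mul_pos h4 h5) h3
    have hgt := eventually_gt_of_hasDerivAt_pos (hψ s hsab) hds
    have hev2 : ∀ᶠ t in nhdsWithin s (Set.Ioi s), ψ t < 0 := by
      filter_upwards [Ioc_mem_nhdsGT_of_mem ⟨le_refl s, hsr₀⟩] with t ht
      exact hslt t ht.1 ht.2
    have hfalse : ∀ᶠ t in nhdsWithin s (Set.Ioi s), False := by
      filter_upwards [hgt, hev2] with t h1 h2'
      rw [hψs] at h1
      linarith
    obtain ⟨t, ht⟩ := hfalse.exists
    exact ht
  -- Step 2: the derivative is positive on (a, r₀]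
  have hdpos : ∀ r ∈ Set.Ioc a r₀, 0 < solitonRHS n k R (ψ r) r := by
    intro r hr
    have hrab := hIoo hr
    have hr1 := hab hrab
    have h2 : 0 < 1 - r^2 := by nlinarith [hr1.1, hr1.2]
    have hu : ψ r < 0 := hnegall r hr
    have hrR : r < R := lt_of_le_of_lt hr.2 hr₀R'
    unfold solitonRHS
    have hb : 0 < ((n:ℝ)-1)*(r-R)*(ψ r) + Real.sqrt (1-r^2) := by
      have h3 : 0 < ((n:ℝ)-1)*(r-R)*(ψ r) :=
        mul_pos_of_neg_of_neg (mul_neg_of_pos_of_neg (by linarith) (by linarith)) hu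
      have := Real.sqrt_nonneg (1-r^2)
      linarith
    have hc : 0 < 1/((k:ℝ)*(1-r^2)) := one_div_pos.2 (mul_pos hkpos h2)
    have hd : 0 < (ψ r)^2 + 1 := by positivity
    exact mul_pos (mul_pos hc hd) hb
  -- monotonicity on (a, r₀]
  have hmono : MonotoneOn ψ (Set.Ioc a r₀) := by
    apply monotoneOn_of_deriv_nonneg (convex_Ioc a r₀)
    · exact fun r hr => ((hψ r (hIoo hr)).continuousAt).continuousWithinAt
    · intro r hr
      rw [interior_Ioc] at hr
      exact ((hψ r (hIoo (Set.Ioo_subset_Ioc_self hr))).differentiableAt).differentiableWithinAt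
    · intro r hr
      rw [interior_Ioc] at hr
      rw [(hψ r (hIoo (Set.Ioo_subset_Ioc_self hr))).deriv]
      exact le_of_lt (hdpos r (Set.Ioo_subset_Ioc_self hr))
  -- the comparison function F
  obtain ⟨δ, hδdef⟩ : ∃ δ : ℝ, δ = ((n:ℝ)-1)*(R - r₀) := ⟨_, rfl⟩
  have hδ : 0 < δ := by rw [hδdef]; exact mul_pos (by linarith) (by linarith)
  obtain ⟨C, hCdef⟩ : ∃ C : ℝ, C = δ/(2*(k:ℝ)) := ⟨_, rfl⟩
  have hC : 0 < C := by rw [hCdef]; exact div_pos hδ (by linarith)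
  have hFd : ∀ r ∈ Set.Ioc a r₀,
      HasDerivAt (fun r => -1/(2 * ψ r^2) + C * Real.log (1+r))
        (solitonRHS n k R (ψ r) r / (ψ r)^3 + C/(1+r)) r := by
    intro r hr
    have hrab := hIoo hr
    have hr1 := hab hrab
    have hu : ψ r < 0 := hnegall r hr
    have hune : ψ r ≠ 0 := ne_of_lt hu
    have h1r : 0 < 1 + r := by linarith [hr1.1]
    have h1 : HasDerivAt (fun r => -1/(2 * ψ r^2))
        (solitonRHS n k R (ψ r) r / (ψ r)^3) r := by
      have hpow : HasDerivAt (fun r => 2 * ψ r^2)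
          (2 * ((2:ℕ) * ψ r^(2-1) * solitonRHS n k R (ψ r) r)) r :=
        ((hψ r hrab).pow 2).const_mul 2
      have hne2 : 2 * ψ r^2 ≠ 0 := by positivity
      have hdiv := (hasDerivAt_const r (-1:ℝ)).div hpow hne2
      refine hdiv.congr_deriv ?_
      rw [div_eq_div_iff (pow_ne_zero 2 hne2) (pow_ne_zero 3 hune), show (2:ℕ) - 1 = 1 from rfl]
      push_cast
      ring
    have h2 : HasDerivAt (fun r => C * Real.log (1+r)) (C/(1+r)) r := by
      have hadd : HasDerivAt (fun x : ℝ => 1 + x) 1 r := (hasDerivAt_id r).const_add 1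
      have hlog := (Real.hasDerivAt_log (ne_of_gt h1r)).comp r hadd
      have := hlog.const_mul C
      refine this.congr_deriv ?_
      ring
    exact h1.add h2
  -- the derivative of F is nonpositive
  have hDle : ∀ t ∈ Set.Ioc a r₀,
      solitonRHS n k R (ψ t) t / (ψ t)^3 + C/(1+t) ≤ 0 := by
    intro t ht
    have htab := hIoo ht
    have ht1 := hab htab
    have hu : ψ t < 0 := hnegall t ht
    have hune : ψ t ≠ 0 := ne_of_lt hu
    have h1r : 0 < 1 + t := by linarith [ht1.1]
    have h2 : 0 < 1 - t^2 := by nlinarith [ht1.1, ht1.2]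
    have hsq := Real.sqrt_nonneg (1-t^2)
    have hv : solitonRHS n k R (ψ t) t =
        ((ψ t)^2+1)*(((n:ℝ)-1)*(t-R)*(ψ t) + Real.sqrt (1-t^2))/((k:ℝ)*(1-t^2)) := by
      unfold solitonRHS
      ring
    have hB : δ * (-(ψ t)) ≤ ((n:ℝ)-1)*(t-R)*(ψ t) + Real.sqrt (1-t^2) := by
      have h3 : δ ≤ ((n:ℝ)-1)*(R-t) := by
        rw [hδdef]
        apply mul_le_mul_of_nonneg_left (by linarith [ht.2]) (by linarith)
      have h4 := mul_le_mul_of_nonneg_right h3 (by linarith : (0:ℝ) ≤ -(ψ t))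
      nlinarith [hsq]
    have hB0 : 0 ≤ ((n:ℝ)-1)*(t-R)*(ψ t) + Real.sqrt (1-t^2) :=
      le_trans (mul_nonneg hδ.le (by linarith)) hB
    exact soliton_key_ineq (k:ℝ) δ C (ψ t) (((n:ℝ)-1)*(t-R)*(ψ t) + Real.sqrt (1-t^2)) t
      (solitonRHS n k R (ψ t) t) hkpos hδ hC hCdef hu hune h1r h2 hv hB hB0
  -- F is antitone, giving the lower bound on a
  have hFanti : ∀ x ∈ Set.Ioc a r₀,
      -1/(2 * ψ r₀^2) + C * Real.log (1+r₀) ≤ -1/(2 * ψ x^2) + C * Real.log (1+x) := by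
    intro x hx
    have hsub : Set.Icc x r₀ ⊆ Set.Ioc a r₀ := fun t ht =>
      ⟨lt_of_lt_of_le hx.1 ht.1, ht.2⟩
    have hanti : AntitoneOn (fun r => -1/(2 * ψ r^2) + C * Real.log (1+r)) (Set.Icc x r₀) := by
      apply antitoneOn_of_deriv_nonpos (convex_Icc x r₀)
      · exact fun t ht => ((hFd t (hsub ht)).continuousAt).continuousWithinAt
      · intro t ht
        rw [interior_Icc] at ht
        exact ((hFd t (hsub (Set.Ioo_subset_Icc_self ht))).differentiableAt).differentiableWithinAt
      · intro t ht
        rw [interior_Icc] at ht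
        rw [(hFd t (hsub (Set.Ioo_subset_Icc_self ht))).deriv]
        exact hDle t (hsub (Set.Ioo_subset_Icc_self ht))
    exact hanti (Set.left_mem_Icc.2 hx.2) (Set.right_mem_Icc.2 hx.2) hx.2
  have hbound : ∀ x ∈ Set.Ioc a r₀,
      Real.exp ((-1/(2 * ψ r₀^2) + C * Real.log (1+r₀))/C) ≤ 1 + x := by
    intro x hx
    have h1x : 0 < 1 + x := by linarith [(hab (hIoo hx)).1]
    have hFx := hFanti x hx
    have hxneg : -1/(2*ψ x^2) ≤ 0 := by
      have h5 : (0:ℝ) < ψ x^2 := by nlinarith [hnegall x hx]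
      have h6 : (0:ℝ) < 2*ψ x^2 := by linarith
      exact div_nonpos_of_nonpos_of_nonneg (by norm_num) (le_of_lt h6)
    have hlog1 : -1/(2 * ψ r₀^2) + C * Real.log (1+r₀) ≤ C * Real.log (1+x) := by linarith
    have hlog : (-1/(2 * ψ r₀^2) + C * Real.log (1+r₀))/C ≤ Real.log (1+x) := by
      rw [div_le_iff₀ hC]
      linarith [hlog1]
    calc Real.exp ((-1/(2 * ψ r₀^2) + C * Real.log (1+r₀))/C)
        ≤ Real.exp (Real.log (1+x)) := Real.exp_le_exp.2 hlog
      _ = 1+x := Real.exp_log h1x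
  have ha : -1 < a := by
    by_contra hcon
    push_neg at hcon
    obtain ⟨E, hEdef⟩ : ∃ E : ℝ, E = Real.exp ((-1/(2 * ψ r₀^2) + C * Real.log (1+r₀))/C) :=
      ⟨_, rfl⟩
    have hE : 0 < E := hEdef ▸ Real.exp_pos _
    have hxgt : -1 < min (E/2-1) r₀ := lt_min (by linarith) hr₀m1
    have hx : min (E/2-1) r₀ ∈ Set.Ioc a r₀ := ⟨lt_of_le_of_lt hcon hxgt, min_le_right _ _⟩
    have h1 := hbound _ hx
    rw [← hEdef] at h1
    have h2 : min (E/2-1) r₀ ≤ E/2-1 := min_le_left _ _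
    linarith
  -- case split on boundedness of ψ near a
  by_cases hbdd : BddBelow (ψ '' Set.Ioc a r₀)
  · -- bounded: extend the solution, contradicting maximality
    exfalso
    obtain ⟨L, hLdef⟩ : ∃ L : ℝ, L = sInf (ψ '' Set.Ioc a r₀) := ⟨_, rfl⟩
    have hne : (ψ '' Set.Ioc a r₀).Nonempty := ⟨ψ r₀, r₀, ⟨hr₀a, le_refl r₀⟩, rfl⟩
    have hLt : Tendsto ψ (nhdsWithin a (Set.Ioi a)) (nhds L) := by
      rw [tendsto_order]
      constructor
      · intro c hc
        filter_upwards [Ioc_mem_nhdsGT_of_mem ⟨le_refl a, hr₀a⟩] with r hr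
        exact lt_of_lt_of_le hc (le_trans (hLdef ▸ csInf_le hbdd ⟨r, hr, rfl⟩) (le_refl _))
      · intro c hc
        rw [hLdef] at hc
        obtain ⟨y, ⟨x, hx, rfl⟩, hyc⟩ := (csInf_lt_iff hbdd hne).1 hc
        filter_upwards [Ioc_mem_nhdsGT_of_mem ⟨le_refl a, hx.1⟩] with r hr
        exact lt_of_le_of_lt (hmono ⟨hr.1, le_trans hr.2 hx.2⟩ hx hr.2) hyc
    have ha1 : a < 1 := by linarith
    have h1a : 1 - a^2 ≠ 0 := by nlinarith
    obtain ⟨φ, hφa, ε₀, hε₀, hφ⟩ := soliton_local_sol n k R a L h1a hk0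
    obtain ⟨ε1, hε1def⟩ : ∃ ε1 : ℝ, ε1 = min ε₀ (min (a+1) (b-a)) := ⟨_, rfl⟩
    have hε1 : 0 < ε1 := by
      rw [hε1def]; exact lt_min hε₀ (lt_min (by linarith) (by linarith))
    have hε1a : ε1 ≤ ε₀ := hε1def ▸ min_le_left _ _
    have hε1b : ε1 ≤ a + 1 := hε1def ▸ le_trans (min_le_right _ _) (min_le_left _ _)
    have hε1c : ε1 ≤ b - a := hε1def ▸ le_trans (min_le_right _ _) (min_le_right _ _)
    obtain ⟨Φ, hΦdef⟩ : ∃ Φ : ℝ → ℝ, Φ = fun r => if r ≤ a then φ r else ψ r := ⟨_, rfl⟩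
    have hΦle : ∀ y, y ≤ a → Φ y = φ y := fun y hy => by rw [hΦdef]; exact if_pos hy
    have hΦgt : ∀ y, a < y → Φ y = ψ y := fun y hy => by
      rw [hΦdef]; exact if_neg (not_le.2 hy)
    have hEq : Set.EqOn Φ ψ (Set.Ioo a b) := fun r hr => hΦgt r hr.1
    have hΦψ : ∀ y ∈ Set.Ioo a r₀, HasDerivAt Φ (solitonRHS n k R (ψ y) y) y := by
      intro y hy
      have hev : Φ =ᶠ[nhds y] ψ := by
        filter_upwards [Ioi_mem_nhds hy.1] with z hz
        exact hΦgt z hz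
      exact (hψ y (hIoo ⟨hy.1, hy.2.le⟩)).congr_of_eventuallyEq hev
    have hΦa : Φ a = L := by rw [hΦle a le_rfl, hφa]
    have hderiv : ∀ r ∈ Set.Ioo (a - ε1/2) b, HasDerivAt Φ (solitonRHS n k R (Φ r) r) r := by
      intro r hr
      rcases lt_trichotomy r a with hlt | heq | hgt
      · have hrI : r ∈ Set.Ioo (a - ε₀) (a + ε₀) := by
          constructor
          · have := hr.1; linarith
          · linarith
        have hev : Φ =ᶠ[nhds r] φ := by
          filter_upwards [Iio_mem_nhds hlt] with y hy
          exact hΦle y (le_of_lt hy)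
        have hd := (hφ r hrI).congr_of_eventuallyEq hev
        rw [hΦle r (le_of_lt hlt)]
        exact hd
      · subst heq
        have hleft : HasDerivWithinAt Φ (solitonRHS n k R L r) (Set.Iic r) r := by
          have hφd := hφ r (by constructor <;> linarith)
          rw [hφa] at hφd
          exact (hφd.hasDerivWithinAt).congr (fun y hy => hΦle y hy) (hΦle r le_rfl)
        have hright : HasDerivWithinAt Φ (solitonRHS n k R L r) (Set.Ici r) r := by
          apply hasDerivWithinAt_Ici_of_tendsto_deriv (s := Set.Ioo r r₀)
          · exact fun y hy => ((hΦψ y hy).differentiableAt).differentiableWithinAt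
          · rw [ContinuousWithinAt, hΦa]
            apply Tendsto.congr' ?_ (hLt.mono_left (nhdsWithin_mono r Set.Ioo_subset_Ioi_self))
            filter_upwards [self_mem_nhdsWithin] with y hy
            exact (hΦgt y hy.1).symm
          · exact Ioo_mem_nhdsGT_of_mem ⟨le_refl r, hr₀a⟩
          · have hWc : ContinuousAt (fun p : ℝ × ℝ => solitonRHS n k R p.2 p.1) (r, L) :=
              (soliton_contDiffAt n k R r L h1a hk0).continuousAt
            have htend : Tendsto (fun y => (y, ψ y)) (nhdsWithin r (Set.Ioi r)) (nhds (r, L)) :=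
              (tendsto_id.mono_left nhdsWithin_le_nhds).prodMk_nhds hLt
            have h2 := hWc.tendsto.comp htend
            rw [Function.comp_def] at h2
            simp only [] at h2
            have h2' : Tendsto (fun y => solitonRHS n k R (ψ y) y)
                (nhdsWithin r (Set.Ioi r)) (nhds (solitonRHS n k R L r)) := h2
            apply Tendsto.congr' ?_ h2'
            filter_upwards [Ioo_mem_nhdsGT_of_mem ⟨le_refl r, hr₀a⟩] with y hy
            exact ((hΦψ y hy).deriv).symm
        have hunion := hleft.union hright
        rw [Set.Iic_union_Ici] at hunion
        rw [hΦa]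
        exact hasDerivWithinAt_univ.1 hunion
      · have hev : Φ =ᶠ[nhds r] ψ := by
          filter_upwards [Ioi_mem_nhds hgt] with z hz
          exact hΦgt z hz
        have hd := (hψ r ⟨hgt, hr.2⟩).congr_of_eventuallyEq hev
        rw [hΦgt r hgt]
        exact hd
    exact hmax ⟨a - ε1/2, Φ, by linarith, by linarith, hEq, hderiv⟩
  · -- unbounded: blow-up at a
    refine ⟨a, ⟨ha, hr₀a⟩, ?_⟩
    rw [tendsto_atBot]
    intro M
    rw [not_bddBelow_iff] at hbdd
    obtain ⟨y, ⟨x, hx, rfl⟩, hyM⟩ := hbdd M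
    filter_upwards [Ioc_mem_nhdsGT_of_mem ⟨le_refl a, hx.1⟩] with r hr
    exact le_trans (hmono ⟨hr.1, le_trans hr.2 hx.2⟩ hx hr.2) (le_of_lt hyM)
end
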